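/- arXiv:0802.1387 — 4 statements merged into one kernel-verified Lean document; each statement's English description precedes it below -/
import Mathlib

section
/- For every i ∈ {1,...,m} and ℓ ∈ {1,...,m}, the conditional probability P(X_1 = i < X_2 < X_3 < ... < X_ℓ | X_1 = i) equals C(m-i, ℓ-1)/(m-1)^{ℓ-1} if m - i ≥ ℓ - 1, and equals 0 otherwise. -/
open MeasureTheory
open scoped ENNReal

/-- Conditional probability P(A | B) as a real number. -/
noncomputable def condP {Ω : Type*} [MeasurableSpace Ω] (μ : MeasureTheory.Measure Ω)
    (A B : Set Ω) : ℝ := (μ (A ∩ B)).toReal / (μ B).toReal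

open Finset in
lemma countV (m i n : ℕ) (hi1 : 1 ≤ i) (him : i ≤ m)
    [DecidablePred fun v : Fin (n+1) → ℕ => StrictMono v ∧ v 0 = i] :
    ((Fintype.piFinset fun _ : Fin (n+1) => Finset.Icc 1 m).filter
      (fun v => StrictMono v ∧ v 0 = i)).card = (m - i).choose n := by
  have hcard : ((Finset.Icc (i+1) m).powersetCard n).card = (m - i).choose n := by
    rw [Finset.card_powersetCard, Nat.card_Icc]
    congr 1
    omega
  rw [← hcard]
  symm
  apply Finset.card_bij (fun s hs =>
    (insert i s).orderEmbOfFin (k := n + 1) (by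
      have hs' := Finset.mem_powersetCard.1 hs
      rw [Finset.card_insert_of_notMem, hs'.2]
      intro hmem
      have := hs'.1 hmem
      simp only [Finset.mem_Icc] at this
      omega))
  · -- maps into the filter set
    intro s hs
    have hs' := Finset.mem_powersetCard.1 hs
    have hins : ∀ x ∈ insert i s, x ∈ Finset.Icc 1 m := by
      intro x hx
      rcases Finset.mem_insert.1 hx with rfl | hx
      · simp [hi1, him]
      · have := hs'.1 hx
        simp only [Finset.mem_Icc] at this ⊢
        omega
    refine Finset.mem_filter.2 ⟨Fintype.mem_piFinset.2 fun k => hins _ (Finset.orderEmbOfFin_mem _ _ _), ((insert i s).orderEmbOfFin _).strictMono, ?_⟩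
    -- value at zero is the min, which is i
    rw [show (0 : Fin (n+1)) = ⟨0, Nat.succ_pos n⟩ from rfl, Finset.orderEmbOfFin_zero]
    apply le_antisymm
    · exact Finset.min'_le _ _ (Finset.mem_insert_self _ _)
    · apply Finset.le_min'
      intro y hy
      rcases Finset.mem_insert.1 hy with rfl | hy
      · exact le_rfl
      · have := hs'.1 hy
        simp only [Finset.mem_Icc] at this
        omega
  · -- injective
    intro s hs t ht heq
    have hs' := Finset.mem_powersetCard.1 hs
    have ht' := Finset.mem_powersetCard.1 ht
    have hisns : i ∉ s := fun hmem => by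
      have := hs'.1 hmem; simp only [Finset.mem_Icc] at this; omega
    have hisnt : i ∉ t := fun hmem => by
      have := ht'.1 hmem; simp only [Finset.mem_Icc] at this; omega
    have hr := congrArg Set.range heq
    rw [Finset.range_orderEmbOfFin, Finset.range_orderEmbOfFin] at hr
    have : insert i s = insert i t := Finset.coe_injective hr
    have : s = t := by
      have hes := Finset.erase_insert hisns
      have het := Finset.erase_insert hisnt
      rw [← hes, ← het, this]
    exact this
  · -- surjective
    intro v hv
    obtain ⟨hvpi, hmono, hv0⟩ := Finset.mem_filter.1 hv
    have hvpi' := Fintype.mem_piFinset.1 hvpi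
    set t : Finset ℕ := Finset.image v Finset.univ with ht
    have hit : i ∈ t := by
      rw [ht]; exact Finset.mem_image.2 ⟨0, Finset.mem_univ _, hv0⟩
    refine ⟨t.erase i, ?_, ?_⟩
    · apply Finset.mem_powersetCard.2
      constructor
      · intro x hx
        obtain ⟨hxne, hxt⟩ := Finset.mem_erase.1 hx
        obtain ⟨k, _, rfl⟩ := Finset.mem_image.1 hxt
        have hk0 : k ≠ 0 := fun h => hxne (h ▸ hv0)
        have : v 0 < v k := hmono (Fin.pos_of_ne_zero hk0)
        have := hvpi' k
        simp only [Finset.mem_Icc] at this ⊢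
        omega
      · have : t.card = n + 1 := by
          rw [ht, Finset.card_image_of_injective _ hmono.injective, Finset.card_univ,
            Fintype.card_fin]
        rw [Finset.card_erase_of_mem hit, this]
        omega
    · have hins : insert i (t.erase i) = t := Finset.insert_erase hit
      have hvt : ∀ x, v x ∈ insert i (t.erase i) := by
        intro x; rw [hins, ht]; exact Finset.mem_image.2 ⟨x, Finset.mem_univ _, rfl⟩
      exact (Finset.orderEmbOfFin_unique _ hvt hmono).symm

/-- For i, ℓ ∈ {1,...,m},
P(X_1 = i < X_2 < ... < X_ℓ | X_1 = i) = C(m-i, ℓ-1)/(m-1)^{ℓ-1} if m-i ≥ ℓ-1,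
and 0 otherwise. -/
theorem psi_formula {Ω : Type*} [MeasurableSpace Ω] (μ : Measure Ω)
    [IsProbabilityMeasure μ] (m : ℕ) (hm : 2 ≤ m) (X : ℕ → Ω → ℕ)
    (hX : ∀ k, Measurable (X k))
    (hLaw : ∀ n, 1 ≤ n → ∀ f : ℕ → ℕ,
      μ {ω | ∀ k, 1 ≤ k → k ≤ n → X k ω = f k} =
        (if f 1 ∈ Finset.Icc 1 m then (1 : ℝ≥0∞) / m else 0) *
          ∏ k ∈ Finset.Icc 1 (n - 1),
            (if f (k + 1) ∈ Finset.Icc 1 m ∧ f (k + 1) ≠ f k then (1 : ℝ≥0∞) / (m - 1) else 0))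
    (i ℓ : ℕ) (hi : i ∈ Finset.Icc 1 m) (hℓ : ℓ ∈ Finset.Icc 1 m) :
    condP μ {ω | ∀ k, 1 ≤ k → k < ℓ → X k ω < X (k + 1) ω} {ω | X 1 ω = i} =
      if ℓ - 1 ≤ m - i
        then (((m - i).choose (ℓ - 1) : ℕ) : ℝ) / ((m - 1 : ℕ) : ℝ) ^ (ℓ - 1)
        else 0 := by
  classical
  simp only [Finset.mem_Icc] at hi hℓ
  obtain ⟨hi1, him⟩ := hi
  obtain ⟨hℓ1, hℓm⟩ := hℓ
  obtain ⟨n, rfl⟩ : ∃ n, ℓ = n + 1 := ⟨ℓ - 1, by omega⟩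
  set A : Set Ω := {ω | ∀ k, 1 ≤ k → k < n + 1 → X k ω < X (k + 1) ω} with hAdef
  set B : Set Ω := {ω | X 1 ω = i} with hBdef
  have hiIcc : i ∈ Finset.Icc 1 m := Finset.mem_Icc.2 ⟨hi1, him⟩
  -- measure of B
  have hmB : μ B = 1 / (m : ℝ≥0∞) := by
    have h1 := hLaw 1 le_rfl (fun _ => i)
    have hset : {ω | ∀ k, 1 ≤ k → k ≤ 1 → X k ω = (fun _ => i) k} = B := by
      ext ω
      constructor
      · intro h; exact h 1 le_rfl le_rfl
      · intro h k hk1 hk2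
        have hk : k = 1 := le_antisymm hk2 hk1
        subst hk; exact h
    rw [hset] at h1
    rw [h1]
    simp [hiIcc]
  -- the basic cylinder sets
  set S : (Fin (n+1) → ℕ) → Set Ω :=
    fun v => {ω | ∀ k : Fin (n+1), X ((k : ℕ) + 1) ω = v k} with hSdef
  set T : (Fin (n+1) → ℕ) → Set Ω :=
    fun v => if StrictMono v ∧ v 0 = i then S v else ∅ with hTdef
  -- extension of v to ℕ
  set w : (Fin (n+1) → ℕ) → ℕ → ℕ :=
    fun v k => if h : k < n + 1 then v ⟨k, h⟩ else 0 with hwdef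
  have hw : ∀ (v : Fin (n+1) → ℕ) (j : ℕ) (h : j < n + 1), w v j = v ⟨j, h⟩ :=
    fun v j h => dif_pos h
  -- measure of S v for admissible v
  have hSval : ∀ v : Fin (n+1) → ℕ, StrictMono v → v 0 = i →
      μ (S v) = (1 / (m : ℝ≥0∞)) * ∏ k ∈ Finset.Icc 1 n,
        (if w v k ≤ m then (1 : ℝ≥0∞) / ((m : ℝ≥0∞) - 1) else 0) := by
    intro v hmono hv0
    have h1 := hLaw (n + 1) (by omega) (fun k => w v (k - 1))
    have hset : {ω | ∀ k, 1 ≤ k → k ≤ n + 1 → X k ω = (fun k => w v (k - 1)) k} = S v := by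
      ext ω
      constructor
      · intro h k
        have hk := h ((k : ℕ) + 1) (by omega) (by omega)
        simp only [Nat.add_sub_cancel] at hk
        rw [hk, hw v k k.isLt]
      · intro h k hk1 hk2
        have hk := h ⟨k - 1, by omega⟩
        simp only at hk
        have hkk : k - 1 + 1 = k := by omega
        rw [hkk] at hk
        rw [hk]
        simp only
        rw [hw v (k - 1) (by omega)]
    rw [hset] at h1
    rw [h1]
    have hf1 : w v (1 - 1) = i := by
      rw [show (1 : ℕ) - 1 = 0 from rfl, hw v 0 (by omega)]
      exact hv0
    simp only [hf1, hiIcc, if_pos, Nat.add_sub_cancel]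
    congr 1
    apply Finset.prod_congr rfl
    intro k hk
    simp only [Finset.mem_Icc] at hk
    have hk1 := hk.1
    have hkn := hk.2
    have hwk : w v k = v ⟨k, by omega⟩ := hw v k (by omega)
    have hwk' : w v (k - 1) = v ⟨k - 1, by omega⟩ := hw v (k - 1) (by omega)
    have hne : v ⟨k, by omega⟩ ≠ v ⟨k - 1, by omega⟩ := by
      apply ne_of_gt
      apply hmono
      simp only [Fin.mk_lt_mk]
      omega
    have hge1 : 1 ≤ v ⟨k, by omega⟩ := by
      have : v 0 ≤ v ⟨k, by omega⟩ := hmono.monotone (by simp [Fin.le_def])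
      omega
    rw [hwk, hwk']
    by_cases hkm : v (⟨k, by omega⟩ : Fin (n+1)) ≤ m
    · rw [if_pos, if_pos hkm]
      exact ⟨Finset.mem_Icc.2 ⟨hge1, hkm⟩, hne⟩
    · rw [if_neg, if_neg hkm]
      intro ⟨hmem, _⟩
      exact hkm (Finset.mem_Icc.1 hmem).2
  -- the union decomposition
  have hUnion : (⋃ v : Fin (n+1) → ℕ, T v) = A ∩ B := by
    ext ω
    simp only [Set.mem_iUnion]
    constructor
    · rintro ⟨v, hv⟩
      rw [hTdef] at hv
      simp only at hv
      by_cases hadm : StrictMono v ∧ v 0 = i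
      · rw [if_pos hadm] at hv
        obtain ⟨hmono, hv0⟩ := hadm
        constructor
        · intro k hk1 hk2
          have h1 : X k ω = v ⟨k - 1, by omega⟩ := by
            have := hv ⟨k - 1, by omega⟩
            simp only at this
            rwa [show k - 1 + 1 = k by omega] at this
          have h2 : X (k + 1) ω = v ⟨k, by omega⟩ := hv ⟨k, by omega⟩
          rw [h1, h2]
          apply hmono
          simp only [Fin.mk_lt_mk]
          omega
        · show X 1 ω = i
          have := hv 0
          simp only [Fin.val_zero, zero_add] at this
          rw [this, hv0]
      · rw [if_neg hadm] at hv
        exact absurd hv (Set.notMem_empty ω)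
    · rintro ⟨hA, hB⟩
      refine ⟨fun k => X ((k : ℕ) + 1) ω, ?_⟩
      have hmono : StrictMono (fun k : Fin (n+1) => X ((k : ℕ) + 1) ω) := by
        rw [Fin.strictMono_iff_lt_succ]
        intro k
        simp only [Fin.coe_castSucc, Fin.val_succ]
        exact hA ((k : ℕ) + 1) (by omega) (by omega)
      rw [hTdef]
      simp only
      rw [if_pos ⟨hmono, by simpa [hBdef] using hB⟩]
      intro k
      rfl
  -- disjointness and measurability
  have hTdisj : Pairwise (Function.onFun Disjoint T) := by
    intro v u hvu
    rw [Function.onFun, hTdef]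
    simp only
    split_ifs with h1 h2 h2
    · rw [Set.disjoint_left]
      intro ω hv hu
      apply hvu
      funext k
      exact (hv k).symm.trans (hu k)
    all_goals simp
  have hTmeas : ∀ v, MeasurableSet (T v) := by
    intro v
    rw [hTdef]
    simp only
    split_ifs with h
    · have : S v = ⋂ k : Fin (n+1), (X ((k : ℕ) + 1)) ⁻¹' {v k} := by
        ext ω; simp [hSdef, Set.mem_iInter]
      rw [this]
      exact MeasurableSet.iInter fun k => (hX _) (measurableSet_singleton _)
    · exact MeasurableSet.empty
  -- measure of A ∩ B
  set c : ℝ≥0∞ := (1 / (m : ℝ≥0∞)) * ((1 : ℝ≥0∞) / ((m : ℝ≥0∞) - 1)) ^ n with hcdef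
  have hμAB : μ (A ∩ B) = ((m - i).choose n : ℝ≥0∞) * c := by
    rw [← hUnion, measure_iUnion hTdisj hTmeas]
    have hzero : ∀ v : Fin (n+1) → ℕ,
        v ∉ Fintype.piFinset (fun _ : Fin (n+1) => Finset.Icc 1 m) → μ (T v) = 0 := by
      intro v hv
      rw [hTdef]
      simp only
      by_cases hadm : StrictMono v ∧ v 0 = i
      · rw [if_pos hadm]
        obtain ⟨hmono, hv0⟩ := hadm
        rw [hSval v hmono hv0]
        obtain ⟨j, hj⟩ : ∃ j : Fin (n+1), v j ∉ Finset.Icc 1 m := by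
          by_contra hcon
          push_neg at hcon
          exact hv (Fintype.mem_piFinset.2 hcon)
        have hj1 : 1 ≤ v j := by
          have : v 0 ≤ v j := hmono.monotone (Fin.zero_le j)
          omega
        have hjm : m < v j := by
          by_contra hcon
          push_neg at hcon
          exact hj (Finset.mem_Icc.2 ⟨hj1, hcon⟩)
        have hjne : j ≠ 0 := by
          intro h
          rw [h, hv0] at hjm
          omega
        have hj0 : 1 ≤ (j : ℕ) := by
          rcases Nat.eq_zero_or_pos (j : ℕ) with h | h
          · exact absurd (Fin.ext h : j = 0) hjne
          · exact h
        rw [Finset.prod_eq_zero (Finset.mem_Icc.2 ⟨hj0, by omega⟩ :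
              (j : ℕ) ∈ Finset.Icc 1 n)]
        · exact mul_zero _
        · rw [if_neg]
          rw [hw v j j.isLt]
          simp only [Fin.eta]
          omega
      · rw [if_neg hadm]
        exact measure_empty
    rw [tsum_eq_sum hzero]
    have hval : ∀ v ∈ Fintype.piFinset (fun _ : Fin (n+1) => Finset.Icc 1 m),
        μ (T v) = if StrictMono v ∧ v 0 = i then c else 0 := by
      intro v hv
      rw [hTdef]
      simp only
      split_ifs with hadm
      · obtain ⟨hmono, hv0⟩ := hadm
        rw [hSval v hmono hv0, hcdef]
        congr 1
        have : ∀ k ∈ Finset.Icc 1 n,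
            (if w v k ≤ m then (1 : ℝ≥0∞) / ((m : ℝ≥0∞) - 1) else 0)
              = (1 : ℝ≥0∞) / ((m : ℝ≥0∞) - 1) := by
          intro k hk
          simp only [Finset.mem_Icc] at hk
          rw [hw v k (by omega), if_pos]
          have := Fintype.mem_piFinset.1 hv ⟨k, by omega⟩
          exact (Finset.mem_Icc.1 this).2
        rw [Finset.prod_congr rfl this, Finset.prod_const, Nat.card_Icc,
          Nat.add_sub_cancel]
      · exact measure_empty
    rw [Finset.sum_congr rfl hval, Finset.sum_ite, Finset.sum_const_zero, add_zero,
      Finset.sum_const, countV m i n hi1 him, nsmul_eq_mul]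
  -- final computation
  have hM1 : ((m : ℝ≥0∞) - 1) = ((m - 1 : ℕ) : ℝ≥0∞) := by
    rw [ENNReal.natCast_sub, Nat.cast_one]
  have hm0 : (m : ℝ) ≠ 0 := by positivity
  have hm1R : ((m - 1 : ℕ) : ℝ) ≠ 0 := by
    have : 1 ≤ m - 1 := by omega
    positivity
  rw [condP, hmB, hμAB, hcdef, hM1]
  simp only [ENNReal.toReal_mul, ENNReal.toReal_pow, ENNReal.toReal_div,
    ENNReal.toReal_natCast, ENNReal.toReal_one, Nat.add_sub_cancel]
  rcases le_or_gt n (m - i) with h | h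
  · rw [if_pos h]
    field_simp
    rw [div_pow, one_pow, mul_assoc, one_div_mul_cancel (pow_ne_zero _ hm1R), mul_one]
  · rw [if_neg (not_le.2 h), Nat.choose_eq_zero_of_lt h]
    simp
end

section
/- For all i, j, ℓ ∈ {1,...,m}, Φ_ℓ(i,j) = [C(m-i, ℓ-1) · 1_{m-i ≥ ℓ-1} − C(j-i, ℓ-1) · 1_{j-i ≥ ℓ-1}] / (m-1)^ℓ, where Φ_ℓ(i,j) is the conditional probability given X_1 = i that the first ascending run has length ℓ and the next run starts with value j, i.e., P(i < X_2 < ... < X_ℓ > X_{ℓ+1} = j | X_1 = i). -/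
open MeasureTheory
open scoped ENNReal

def traj (i ℓ : ℕ) (g : Fin ℓ → ℕ) : ℕ → ℕ :=
  fun k => if h : 2 ≤ k ∧ k ≤ ℓ + 1 then g ⟨k - 2, by omega⟩ else i

lemma traj_of (i ℓ : ℕ) (g : Fin ℓ → ℕ) {k : ℕ} (h2 : 2 ≤ k) (h3 : k ≤ ℓ + 1) :
    traj i ℓ g k = g ⟨k - 2, by omega⟩ := dif_pos ⟨h2, h3⟩

lemma traj_one (i ℓ : ℕ) (g : Fin ℓ → ℕ) : traj i ℓ g 1 = i := dif_neg (by omega)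

def Good (i j ℓ : ℕ) (g : Fin ℓ → ℕ) : Prop :=
  (∀ k, 1 ≤ k → k < ℓ → traj i ℓ g k < traj i ℓ g (k + 1)) ∧
    traj i ℓ g (ℓ + 1) = j ∧ traj i ℓ g (ℓ + 1) < traj i ℓ g ℓ

def GoodB (m i j ℓ : ℕ) (g : Fin ℓ → ℕ) : Prop :=
  Good i j ℓ g ∧ ∀ t, g t ∈ Finset.Icc 1 m


lemma card_strictMono_pi' (r a b : ℕ) :
    ((Fintype.piFinset fun _ : Fin r => Finset.Icc (a+1) b).filter
      (fun g => StrictMono g)).card = (b - a).choose r := by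
  classical
  have key : ((Fintype.piFinset fun _ : Fin r => Finset.Icc (a+1) b).filter
      (fun g => StrictMono g)).card = ((Finset.Icc (a+1) b).powersetCard r).card := by
    apply Finset.card_bij (fun g _ => Finset.image g Finset.univ)
    · intro g hg
      simp only [Finset.mem_filter, Fintype.mem_piFinset] at hg
      rw [Finset.mem_powersetCard]
      constructor
      · intro x hx
        simp only [Finset.mem_image, Finset.mem_univ, true_and] at hx
        obtain ⟨t, rfl⟩ := hx
        exact hg.1 t
      · rw [Finset.card_image_of_injective _ hg.2.injective, Finset.card_univ,
          Fintype.card_fin]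
    · intro g1 h1 g2 h2 heq
      simp only [Finset.mem_filter, Fintype.mem_piFinset] at h1 h2
      have hc2 : (Finset.image g2 Finset.univ).card = r := by
        rw [Finset.card_image_of_injective _ h2.2.injective, Finset.card_univ,
          Fintype.card_fin]
      have e1 : g1 = (Finset.image g2 Finset.univ).orderEmbOfFin hc2 := by
        apply Finset.orderEmbOfFin_unique hc2 _ h1.2
        intro x
        rw [← heq]
        exact Finset.mem_image_of_mem _ (Finset.mem_univ x)
      have e2 : g2 = (Finset.image g2 Finset.univ).orderEmbOfFin hc2 := by
        apply Finset.orderEmbOfFin_unique hc2 _ h2.2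
        intro x
        exact Finset.mem_image_of_mem _ (Finset.mem_univ x)
      rw [e1, ← e2]
    · intro s hs
      rw [Finset.mem_powersetCard] at hs
      refine ⟨s.orderEmbOfFin hs.2, ?_, ?_⟩
      · simp only [Finset.mem_filter, Fintype.mem_piFinset]
        exact ⟨fun t => hs.1 (Finset.orderEmbOfFin_mem s hs.2 t),
          (s.orderEmbOfFin hs.2).strictMono⟩
      · rw [← Finset.coe_inj, Finset.coe_image, Finset.coe_univ, Set.image_univ]
        exact Finset.range_orderEmbOfFin s hs.2
  rw [key, Finset.card_powersetCard, Nat.card_Icc]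
  congr 1
  omega

lemma gcongr_fin {ℓ : ℕ} (g : Fin ℓ → ℕ) {x y : ℕ} (hx : x < ℓ) (hy : y < ℓ) (h : x = y) :
    g ⟨x, hx⟩ = g ⟨y, hy⟩ := by subst h; rfl

lemma good_last {i j ℓ : ℕ} (hℓ : 1 ≤ ℓ) {g : Fin ℓ → ℕ} (hg : Good i j ℓ g) :
    g ⟨ℓ - 1, by omega⟩ = j := by
  have hval := hg.2.1
  rw [traj_of i ℓ g (k := ℓ + 1) (by omega) (by omega)] at hval
  rw [← hval]
  exact gcongr_fin g (by omega) (by omega) (by omega)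

lemma good_max {i j ℓ : ℕ} (hℓ : 2 ≤ ℓ) {g : Fin ℓ → ℕ} (hg : Good i j ℓ g) :
    j < g ⟨ℓ - 2, by omega⟩ := by
  have hlt := hg.2.2
  have hval := hg.2.1
  rw [traj_of i ℓ g (k := ℓ + 1) (by omega) (by omega),
      traj_of i ℓ g (k := ℓ) (by omega) (by omega)] at hlt
  rw [traj_of i ℓ g (k := ℓ + 1) (by omega) (by omega)] at hval
  rw [← hval]
  exact hlt

lemma good_adj {i j ℓ : ℕ} {g : Fin ℓ → ℕ} (hg : Good i j ℓ g) :
    ∀ t : ℕ, ∀ ht : t + 1 < ℓ - 1, g ⟨t, by omega⟩ < g ⟨t + 1, by omega⟩ := by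
  intro t ht
  have h2 := hg.1 (t + 2) (by omega) (by omega)
  rw [traj_of i ℓ g (k := t + 2) (by omega) (by omega),
      traj_of i ℓ g (k := t + 2 + 1) (by omega) (by omega)] at h2
  calc g ⟨t, by omega⟩ = g ⟨t + 2 - 2, by omega⟩ := gcongr_fin g _ _ (by omega)
  _ < g ⟨t + 2 + 1 - 2, by omega⟩ := h2
  _ = g ⟨t + 1, by omega⟩ := gcongr_fin g _ _ (by omega)

lemma good_low {i j ℓ : ℕ} (hℓ : 2 ≤ ℓ) {g : Fin ℓ → ℕ} (hg : Good i j ℓ g) :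
    ∀ t : ℕ, ∀ ht : t < ℓ - 1, i < g ⟨t, by omega⟩ := by
  have hfirst : i < g ⟨0, by omega⟩ := by
    have h1 := hg.1 1 le_rfl (by omega)
    rw [traj_one, traj_of i ℓ g (k := 1 + 1) (by omega) (by omega)] at h1
    calc i < g ⟨1 + 1 - 2, by omega⟩ := h1
    _ = g ⟨0, by omega⟩ := gcongr_fin g _ _ (by omega)
  intro t
  induction t with
  | zero => intro _; exact hfirst
  | succ n ih => intro ht; exact lt_trans (ih (by omega)) (good_adj hg n (by omega))

lemma good_one {i j : ℕ} {g : Fin 1 → ℕ} :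
    Good i j 1 g ↔ g ⟨0, by omega⟩ = j ∧ j < i := by
  have h2 : traj i 1 g (1 + 1) = g ⟨0, by omega⟩ := by
    rw [traj_of i 1 g (k := 1 + 1) (by omega) (by omega)]
  have h1 : traj i 1 g 1 = i := traj_one i 1 g
  constructor
  · rintro ⟨-, hval, hlt⟩
    rw [h2] at hval
    rw [h2, h1, hval] at hlt
    exact ⟨hval, hlt⟩
  · rintro ⟨hval, hlt⟩
    refine ⟨fun k hk1 hk2 => by omega, ?_, ?_⟩
    · rw [h2]; exact hval
    · rw [h2, h1, hval]; exact hlt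

lemma strictMono_fin_of_adj {r : ℕ} {f : Fin r → ℕ}
    (h : ∀ t : ℕ, ∀ ht : t + 1 < r, f ⟨t, by omega⟩ < f ⟨t + 1, ht⟩) : StrictMono f := by
  intro a b hab
  have H : ∀ d : ℕ, ∀ hd : a.1 + d < r, 0 < d → f a < f ⟨a.1 + d, hd⟩ := by
    intro d
    induction d with
    | zero => intro _ h0; omega
    | succ n ih =>
      intro hd _
      rcases Nat.eq_zero_or_pos n with rfl | hn
      · have := h a.1 (by omega)
        simpa using this
      · exact lt_trans (ih (by omega) hn) (h (a.1 + n) (by omega))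
  have hb : b = ⟨a.1 + (b.1 - a.1), by omega⟩ := Fin.ext (by simp; omega)
  rw [hb]
  exact H (b.1 - a.1) (by omega) (by omega)

lemma count_main (m i j ℓ : ℕ) [DecidablePred (GoodB m i j ℓ)]
    (hi : 1 ≤ i) (hj1 : 1 ≤ j) (hjm : j ≤ m) (hℓ : 2 ≤ ℓ) :
    ((Fintype.piFinset fun _ : Fin ℓ => Finset.Icc 1 m).filter (GoodB m i j ℓ)).card
      = (m - i).choose (ℓ - 1) - (j - i).choose (ℓ - 1) := by
  classical
  set r := ℓ - 1 with hr
  have hbij : ((Fintype.piFinset fun _ : Fin ℓ => Finset.Icc 1 m).filter (GoodB m i j ℓ)).card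
      = ((Fintype.piFinset fun _ : Fin r => Finset.Icc (i + 1) m).filter
          (fun h => StrictMono h ∧ ¬ ∀ t, h t ≤ j)).card := by
    refine Finset.card_bij' (fun g _ => fun t : Fin r => g ⟨t.1, by omega⟩)
      (fun h _ => fun t : Fin ℓ => if ht : t.1 < r then h ⟨t.1, ht⟩ else j) ?hi ?hj ?li ?ri
    case hi => -- maps forward
      intro g hg
      rw [Finset.mem_filter] at hg
      obtain ⟨hgS, hgood⟩ := hg
      rw [Fintype.mem_piFinset] at hgS
      refine Finset.mem_filter.2 ⟨Fintype.mem_piFinset.2 fun t => ?_, ?_, ?_⟩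
      · rw [Finset.mem_Icc]
        refine ⟨good_low hℓ hgood.1 t.1 t.2, ?_⟩
        have := hgS ⟨t.1, by omega⟩
        rw [Finset.mem_Icc] at this
        exact this.2
      · apply strictMono_fin_of_adj
        intro t ht
        exact good_adj hgood.1 t ht
      · intro hall
        have h1 := hall ⟨r - 1, by omega⟩
        dsimp only at h1
        rw [gcongr_fin g (by omega) (by omega) (show r - 1 = ℓ - 2 by omega)] at h1
        exact absurd h1 (not_le.mpr (good_max hℓ hgood.1))
    case hj => -- maps backward
      intro h hh
      rw [Finset.mem_filter, Fintype.mem_piFinset] at hh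
      obtain ⟨hmem, hsm, hnall⟩ := hh
      push_neg at hnall
      obtain ⟨t0, ht0⟩ := hnall
      have hmaxh : j < h ⟨r - 1, by omega⟩ :=
        lt_of_lt_of_le ht0 (hsm.monotone (by rw [Fin.le_def]; exact Nat.le_sub_one_of_lt t0.2))
      have hmem' : ∀ t : Fin r, i + 1 ≤ h t ∧ h t ≤ m := by
        intro t; have := hmem t; rw [Finset.mem_Icc] at this; exact this
      refine Finset.mem_filter.2 ⟨Fintype.mem_piFinset.2 fun t => ?_, ⟨?_, ?_, ?_⟩, ?_⟩
      · try dsimp only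
        rw [Finset.mem_Icc]
        by_cases ht : t.1 < r
        · rw [dif_pos ht]
          have := hmem' ⟨t.1, ht⟩
          omega
        · rw [dif_neg ht]; omega
      · -- increasing
        intro k hk1 hkl
        by_cases hk : k = 1
        · subst hk
          rw [traj_one, traj_of _ _ _ (k := 1 + 1) (by omega) (by omega)]
          dsimp only
          rw [dif_pos (show 1 + 1 - 2 < r by omega)]
          have := hmem' ⟨1 + 1 - 2, by omega⟩
          omega
        · rw [traj_of _ _ _ (k := k) (by omega) (by omega),
            traj_of _ _ _ (k := k + 1) (by omega) (by omega)]
          dsimp only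
          rw [dif_pos (show k - 2 < r by omega), dif_pos (show k + 1 - 2 < r by omega)]
          exact hsm (show (⟨k - 2, by omega⟩ : Fin r) < ⟨k + 1 - 2, by omega⟩ by
            rw [Fin.lt_def]; dsimp only; omega)
      · -- value j
        rw [traj_of _ _ _ (k := ℓ + 1) (by omega) (by omega)]
        dsimp only
        rw [dif_neg (show ¬ (ℓ + 1 - 2 < r) by omega)]
      · -- descent
        rw [traj_of _ _ _ (k := ℓ + 1) (by omega) (by omega),
          traj_of _ _ _ (k := ℓ) (by omega) (by omega)]
        dsimp only
        rw [dif_neg (show ¬ (ℓ + 1 - 2 < r) by omega), dif_pos (show ℓ - 2 < r by omega)]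
        calc j < h ⟨r - 1, by omega⟩ := hmaxh
        _ = h ⟨ℓ - 2, by omega⟩ := gcongr_fin h _ _ (by omega)
      · -- membership in Icc 1 m
        intro t
        dsimp only
        rw [Finset.mem_Icc]
        by_cases ht : t.1 < r
        · rw [dif_pos ht]
          have := hmem' ⟨t.1, ht⟩
          omega
        · rw [dif_neg ht]; omega
    case li => -- left inverse
      intro g hg
      dsimp only
      funext t
      by_cases ht : t.1 < r
      · rw [dif_pos ht]
      · rw [dif_neg ht]
        have hlast := good_last (by omega) ((Finset.mem_filter.1 hg).2).1
        rw [← hlast]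
        exact (congrArg g (Fin.ext (by dsimp only; omega))).symm
    case ri => -- right inverse
      intro h hh
      dsimp only
      funext t
      rw [dif_pos t.2]
  rw [hbij]
  have hsub : ((Fintype.piFinset fun _ : Fin r => Finset.Icc (i + 1) m).filter
        (fun h => StrictMono h ∧ ∀ t, h t ≤ j))
      ⊆ ((Fintype.piFinset fun _ : Fin r => Finset.Icc (i + 1) m).filter
        (fun h => StrictMono h)) := by
    intro g hg
    rw [Finset.mem_filter] at hg ⊢
    exact ⟨hg.1, hg.2.1⟩
  have hsd : ((Fintype.piFinset fun _ : Fin r => Finset.Icc (i + 1) m).filter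
          (fun h => StrictMono h))
        \ ((Fintype.piFinset fun _ : Fin r => Finset.Icc (i + 1) m).filter
          (fun h => StrictMono h ∧ ∀ t, h t ≤ j))
      = ((Fintype.piFinset fun _ : Fin r => Finset.Icc (i + 1) m).filter
          (fun h => StrictMono h ∧ ¬ ∀ t, h t ≤ j)) := by
    ext g
    simp only [Finset.mem_sdiff, Finset.mem_filter]
    tauto
  have hB : ((Fintype.piFinset fun _ : Fin r => Finset.Icc (i + 1) m).filter
      (fun h => StrictMono h ∧ ∀ t, h t ≤ j)).card = (j - i).choose r := by
    have hEq : ((Fintype.piFinset fun _ : Fin r => Finset.Icc (i + 1) m).filter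
        (fun h => StrictMono h ∧ ∀ t, h t ≤ j))
        = ((Fintype.piFinset fun _ : Fin r => Finset.Icc (i + 1) j).filter
          (fun h => StrictMono h)) := by
      ext g
      simp only [Finset.mem_filter, Fintype.mem_piFinset, Finset.mem_Icc]
      constructor
      · rintro ⟨hm1, hsm, hle⟩
        exact ⟨fun t => ⟨(hm1 t).1, hle t⟩, hsm⟩
      · rintro ⟨hm1, hsm⟩
        exact ⟨fun t => ⟨(hm1 t).1, le_trans (hm1 t).2 hjm⟩, hsm, fun t => (hm1 t).2⟩
    rw [hEq, card_strictMono_pi']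
  rw [← hsd, Finset.card_sdiff_of_subset hsub, hB, card_strictMono_pi']

lemma count_one (m i j : ℕ) [DecidablePred (GoodB m i j 1)] (hj1 : 1 ≤ j) (hjm : j ≤ m) :
    ((Fintype.piFinset fun _ : Fin 1 => Finset.Icc 1 m).filter (GoodB m i j 1)).card
      = if j < i then 1 else 0 := by
  split_ifs with h
  · rw [Finset.card_eq_one]
    refine ⟨fun _ => j, ?_⟩
    ext g
    simp only [Finset.mem_filter, Fintype.mem_piFinset, Finset.mem_singleton]
    constructor
    · rintro ⟨hmem, hgood, hmemb⟩
      have hval := (good_one.1 hgood).1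
      funext t
      have ht : t = (⟨0, by omega⟩ : Fin 1) := Subsingleton.elim _ _
      rw [ht]; exact hval
    · rintro rfl
      exact ⟨fun t => by simp only [Finset.mem_Icc]; omega,
        good_one.2 ⟨rfl, h⟩, fun t => by simp only [Finset.mem_Icc]; omega⟩
  · rw [Finset.card_eq_zero, Finset.filter_eq_empty_iff]
    intro g hg hGB
    exact h (good_one.1 hGB.1).2

/-- For i, j, ℓ ∈ {1,...,m},
Φ_ℓ(i,j) = P(i < X_2 < ... < X_ℓ > X_{ℓ+1} = j | X_1 = i)
  = [C(m-i,ℓ-1)·1_{m-i ≥ ℓ-1} − C(j-i,ℓ-1)·1_{j-i ≥ ℓ-1}]/(m-1)^ℓ. -/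
theorem Phi_formula {Ω : Type*} [MeasurableSpace Ω] (μ : Measure Ω)
    [IsProbabilityMeasure μ] (m : ℕ) (hm : 2 ≤ m) (X : ℕ → Ω → ℕ)
    (hX : ∀ k, Measurable (X k))
    (hLaw : ∀ n, 1 ≤ n → ∀ f : ℕ → ℕ,
      μ {ω | ∀ k, 1 ≤ k → k ≤ n → X k ω = f k} =
        (if f 1 ∈ Finset.Icc 1 m then (1 : ℝ≥0∞) / m else 0) *
          ∏ k ∈ Finset.Icc 1 (n - 1),
            (if f (k + 1) ∈ Finset.Icc 1 m ∧ f (k + 1) ≠ f k then (1 : ℝ≥0∞) / (m - 1) else 0))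
    (i j ℓ : ℕ) (hi : i ∈ Finset.Icc 1 m) (hj : j ∈ Finset.Icc 1 m)
    (hℓ : ℓ ∈ Finset.Icc 1 m) :
    condP μ {ω | (∀ k, 1 ≤ k → k < ℓ → X k ω < X (k + 1) ω) ∧
        X (ℓ + 1) ω = j ∧ X (ℓ + 1) ω < X ℓ ω} {ω | X 1 ω = i} =
      ((if ℓ - 1 ≤ m - i then (((m - i).choose (ℓ - 1) : ℕ) : ℝ) else 0)
        - (if (ℓ : ℤ) - 1 ≤ (j : ℤ) - (i : ℤ) then (((j - i).choose (ℓ - 1) : ℕ) : ℝ) else 0))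
        / ((m - 1 : ℕ) : ℝ) ^ ℓ := by
  classical
  rw [Finset.mem_Icc] at hi hj hℓ
  obtain ⟨hi1, him⟩ := hi
  obtain ⟨hj1, hjm⟩ := hj
  obtain ⟨hl1, hlm⟩ := hℓ
  -- μ B = 1/m
  have hμB : μ {ω | X 1 ω = i} = 1 / m := by
    have h1 := hLaw 1 le_rfl (fun _ => i)
    have hset : {ω | ∀ k, 1 ≤ k → k ≤ 1 → X k ω = (fun _ => i) k} = {ω | X 1 ω = i} := by
      ext ω
      simp only [Set.mem_setOf_eq]
      constructor
      · intro H; exact H 1 le_rfl le_rfl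
      · intro H k hk1 hk2
        have : k = 1 := le_antisymm hk2 hk1
        rw [this]; exact H
    rw [hset] at h1
    rw [h1, if_pos (by simp only [Finset.mem_Icc]; omega)]
    rw [show (1 : ℕ) - 1 = 0 from rfl, Finset.Icc_eq_empty (by omega), Finset.prod_empty,
      mul_one]
  -- decomposition
  have hAB : {ω | (∀ k, 1 ≤ k → k < ℓ → X k ω < X (k + 1) ω) ∧
        X (ℓ + 1) ω = j ∧ X (ℓ + 1) ω < X ℓ ω} ∩ {ω | X 1 ω = i}
      = ⋃ g : Fin ℓ → ℕ, (if Good i j ℓ g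
          then {ω | ∀ k, 1 ≤ k → k ≤ ℓ + 1 → X k ω = traj i ℓ g k} else ∅) := by
    ext ω
    simp only [Set.mem_inter_iff, Set.mem_iUnion, Set.mem_setOf_eq]
    constructor
    · rintro ⟨⟨hinc, hval, hlt⟩, hω1⟩
      refine ⟨fun t => X (t.1 + 2) ω, ?_⟩
      have hCyl : ∀ k, 1 ≤ k → k ≤ ℓ + 1 → X k ω = traj i ℓ (fun t : Fin ℓ => X (t.1 + 2) ω) k := by
        intro k hk1 hk2
        by_cases hk : k = 1
        · rw [hk, traj_one]; exact hω1
        · rw [traj_of _ _ _ (by omega) (by omega)]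
          dsimp only
          congr 1
          omega
      have hGood : Good i j ℓ (fun t : Fin ℓ => X (t.1 + 2) ω) := by
        refine ⟨?_, ?_, ?_⟩
        · intro k hk1 hk2
          rw [← hCyl k hk1 (by omega), ← hCyl (k + 1) (by omega) (by omega)]
          exact hinc k hk1 hk2
        · rw [← hCyl (ℓ + 1) (by omega) le_rfl]; exact hval
        · rw [← hCyl (ℓ + 1) (by omega) le_rfl, ← hCyl ℓ (by omega) (by omega)]; exact hlt
      rw [if_pos hGood]
      exact fun k hk1 hk2 => hCyl k hk1 hk2
    · rintro ⟨g, hg⟩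
      by_cases hGood : Good i j ℓ g
      · rw [if_pos hGood] at hg
        obtain ⟨hinc, hval, hlt⟩ := hGood
        refine ⟨⟨?_, ?_, ?_⟩, ?_⟩
        · intro k hk1 hk2
          rw [hg k hk1 (by omega), hg (k + 1) (by omega) (by omega)]
          exact hinc k hk1 hk2
        · rw [hg (ℓ + 1) (by omega) le_rfl]; exact hval
        · rw [hg (ℓ + 1) (by omega) le_rfl, hg ℓ (by omega) (by omega)]; exact hlt
        · rw [hg 1 le_rfl (by omega), traj_one]
      · rw [if_neg hGood] at hg
        exact absurd hg (Set.notMem_empty ω)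
  -- disjointness
  have hdisj : Pairwise (Function.onFun Disjoint (fun g : Fin ℓ → ℕ => if Good i j ℓ g
      then {ω | ∀ k, 1 ≤ k → k ≤ ℓ + 1 → X k ω = traj i ℓ g k} else ∅)) := by
    intro g g' hne
    unfold Function.onFun
    dsimp only
    split_ifs with h1 h2
    rotate_left
    · simp
    · simp
    · simp
    rw [Set.disjoint_left]
    intro ω hω hω'
    apply hne
    funext t
    have e1 := hω (t.1 + 2) (by omega) (by omega)
    have e2 := hω' (t.1 + 2) (by omega) (by omega)
    rw [traj_of _ _ _ (by omega) (by omega)] at e1 e2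
    have ht : (⟨t.1 + 2 - 2, by omega⟩ : Fin ℓ) = t := Fin.ext (by dsimp only; omega)
    rw [← ht]
    exact e1.symm.trans e2
  -- measurability
  have hmeasD : ∀ g : Fin ℓ → ℕ, MeasurableSet (if Good i j ℓ g
      then {ω | ∀ k, 1 ≤ k → k ≤ ℓ + 1 → X k ω = traj i ℓ g k} else ∅) := by
    intro g
    split_ifs
    · have hrw : {ω | ∀ k, 1 ≤ k → k ≤ ℓ + 1 → X k ω = traj i ℓ g k}
          = ⋂ (k : ℕ), ⋂ (_ : 1 ≤ k), ⋂ (_ : k ≤ ℓ + 1), X k ⁻¹' {traj i ℓ g k} := by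
        ext ω
        simp only [Set.mem_setOf_eq, Set.mem_iInter, Set.mem_preimage, Set.mem_singleton_iff]
      rw [hrw]
      exact MeasurableSet.iInter fun k => MeasurableSet.iInter fun _ =>
        MeasurableSet.iInter fun _ => hX k (measurableSet_singleton _)
    · exact MeasurableSet.empty
  -- measure of each cylinder
  have hDval : ∀ g : Fin ℓ → ℕ, μ (if Good i j ℓ g
      then {ω | ∀ k, 1 ≤ k → k ≤ ℓ + 1 → X k ω = traj i ℓ g k} else ∅)
      = if GoodB m i j ℓ g then (1 / (m : ℝ≥0∞)) * (1 / ((m : ℝ≥0∞) - 1)) ^ ℓ else 0 := by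
    intro g
    by_cases hGood : Good i j ℓ g
    · rw [if_pos hGood]
      have hL := hLaw (ℓ + 1) (by omega) (traj i ℓ g)
      rw [show ℓ + 1 - 1 = ℓ from rfl] at hL
      rw [hL, traj_one, if_pos (show i ∈ Finset.Icc 1 m by rw [Finset.mem_Icc]; omega)]
      by_cases hmem : ∀ t, g t ∈ Finset.Icc 1 m
      · rw [if_pos ⟨hGood, hmem⟩]
        rw [one_div]
        congr 1
        calc ∏ k ∈ Finset.Icc 1 ℓ, (if traj i ℓ g (k + 1) ∈ Finset.Icc 1 m ∧
              traj i ℓ g (k + 1) ≠ traj i ℓ g k then (1 : ℝ≥0∞) / (m - 1) else 0)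
            = ∏ _k ∈ Finset.Icc 1 ℓ, ((1 : ℝ≥0∞) / ((m : ℝ≥0∞) - 1)) := by
              apply Finset.prod_congr rfl
              intro k hk
              rw [Finset.mem_Icc] at hk
              rw [if_pos]
              constructor
              · rw [traj_of _ _ _ (by omega) (by omega)]
                exact hmem _
              · by_cases hkl : k < ℓ
                · exact (Nat.ne_of_lt (hGood.1 k (by omega) hkl)).symm
                · have : k = ℓ := by omega
                  rw [this]
                  exact Nat.ne_of_lt hGood.2.2
          _ = ((1 : ℝ≥0∞) / ((m : ℝ≥0∞) - 1)) ^ ℓ := by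
              rw [Finset.prod_const, Nat.card_Icc, Nat.add_sub_cancel]
      · rw [if_neg (fun hc => hmem hc.2)]
        obtain ⟨t, ht⟩ := not_forall.1 hmem
        have hzero : ∏ k ∈ Finset.Icc 1 ℓ, (if traj i ℓ g (k + 1) ∈ Finset.Icc 1 m ∧
            traj i ℓ g (k + 1) ≠ traj i ℓ g k then (1 : ℝ≥0∞) / (m - 1) else 0) = 0 := by
          apply Finset.prod_eq_zero (i := t.1 + 1) (Finset.mem_Icc.2 ⟨by omega, by omega⟩)
          rw [if_neg]
          rintro ⟨hc1, -⟩
          apply ht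
          rw [traj_of _ _ _ (by omega) (by omega)] at hc1
          have : (⟨t.1 + 1 + 1 - 2, by omega⟩ : Fin ℓ) = t := Fin.ext (by dsimp only; omega)
          rw [this] at hc1
          exact hc1
        rw [hzero, mul_zero]
    · rw [if_neg hGood, if_neg (fun hc => hGood hc.1), measure_empty]
  -- sum of cylinder measures
  have hmeasure : μ ({ω | (∀ k, 1 ≤ k → k < ℓ → X k ω < X (k + 1) ω) ∧
        X (ℓ + 1) ω = j ∧ X (ℓ + 1) ω < X ℓ ω} ∩ {ω | X 1 ω = i})
      = ∑' g : Fin ℓ → ℕ, μ (if Good i j ℓ g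
          then {ω | ∀ k, 1 ≤ k → k ≤ ℓ + 1 → X k ω = traj i ℓ g k} else ∅) := by
    rw [hAB]
    exact measure_iUnion hdisj hmeasD
  have htsum : (∑' g : Fin ℓ → ℕ, μ (if Good i j ℓ g
          then {ω | ∀ k, 1 ≤ k → k ≤ ℓ + 1 → X k ω = traj i ℓ g k} else ∅))
      = (((Fintype.piFinset fun _ : Fin ℓ => Finset.Icc 1 m).filter (GoodB m i j ℓ)).card : ℝ≥0∞)
        * ((1 / (m : ℝ≥0∞)) * (1 / ((m : ℝ≥0∞) - 1)) ^ ℓ) := by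
    simp only [hDval]
    rw [tsum_eq_sum (s := Fintype.piFinset fun _ : Fin ℓ => Finset.Icc 1 m)
      (fun g hg => by
        rw [if_neg]
        rintro ⟨-, hmem2⟩
        exact hg (Fintype.mem_piFinset.2 hmem2))]
    rw [← Finset.sum_filter, Finset.sum_const, nsmul_eq_mul]
  -- the count
  have hNval : ((((Fintype.piFinset fun _ : Fin ℓ => Finset.Icc 1 m).filter
        (GoodB m i j ℓ)).card : ℕ) : ℝ)
      = (if ℓ - 1 ≤ m - i then (((m - i).choose (ℓ - 1) : ℕ) : ℝ) else 0)
        - (if (ℓ : ℤ) - 1 ≤ (j : ℤ) - (i : ℤ) then (((j - i).choose (ℓ - 1) : ℕ) : ℝ) else 0) := by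
    by_cases hcase : ℓ = 1
    · subst hcase
      rw [count_one m i j hj1 hjm]
      rcases lt_or_ge j i with h | h
      · rw [if_pos h, if_pos (by omega), if_neg (by omega)]
        norm_num
      · rw [if_neg (not_lt.2 h), if_pos (by omega), if_pos (by omega)]
        norm_num
    · have hl2 : 2 ≤ ℓ := by omega
      rw [count_main m i j ℓ hi1 hj1 hjm hl2]
      have hle : (j - i).choose (ℓ - 1) ≤ (m - i).choose (ℓ - 1) :=
        Nat.choose_le_choose _ (by omega)
      rw [Nat.cast_sub hle]
      congr 1
      · by_cases h1 : ℓ - 1 ≤ m - i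
        · rw [if_pos h1]
        · rw [if_neg h1, Nat.choose_eq_zero_of_lt (by omega), Nat.cast_zero]
      · by_cases h2 : (ℓ : ℤ) - 1 ≤ (j : ℤ) - (i : ℤ)
        · rw [if_pos h2]
        · rw [if_neg h2, Nat.choose_eq_zero_of_lt (by omega), Nat.cast_zero]
  -- final arithmetic
  unfold condP
  rw [hmeasure, htsum, hμB]
  have hcast : ((m : ℝ≥0∞) - 1) = ((m - 1 : ℕ) : ℝ≥0∞) := by
    rw [ENNReal.natCast_sub, Nat.cast_one]
  rw [hcast]
  rw [ENNReal.toReal_mul, ENNReal.toReal_mul, ENNReal.toReal_pow, ENNReal.toReal_div,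
    ENNReal.toReal_div, ENNReal.toReal_one, ENNReal.toReal_natCast, ENNReal.toReal_natCast, ENNReal.toReal_natCast]
  rw [hNval]
  have hmne : (m : ℝ) ≠ 0 := Nat.cast_ne_zero.2 (by omega)
  have h1m : (1 : ℝ) / (m : ℝ) ≠ 0 := one_div_ne_zero hmne
  rw [mul_comm ((1 : ℝ) / (m : ℝ)), ← mul_assoc, mul_div_cancel_right₀ _ h1m]
  rw [div_pow, one_pow, mul_one_div]
end

section
/- For 2 ≤ r ≤ m, the hitting time T_r of an ascending run of length at least r satisfies: P(T_r ≤ n | X_1 = i) = 0 for 1 ≤ n ≤ r−1, and for n ≥ r, P(T_r ≤ n | X_1 = i) = ψ_r(i) + ∑_{ℓ=1}^{r-1} ∑_{j=1}^m Φ_ℓ(i,j) · P(T_r ≤ n−ℓ | X_1 = j). -/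
open MeasureTheory
open scoped ENNReal

open scoped Classical

section Aux

variable {Ω : Type*} [MeasurableSpace Ω]

/-- ascending pattern up to time t -/
def AscP (t : ℕ) (f : ℕ → ℕ) : Prop := ∀ k, 1 ≤ k → k < t → f k < f (k + 1)

/-- hitting pattern -/
def HitP (r N : ℕ) (f : ℕ → ℕ) : Prop :=
  ∃ k, r ≤ k ∧ k ≤ N ∧ ∀ s, k - r + 1 ≤ s → s < k → f s < f (s + 1)

/-- cylinder weight -/
noncomputable def W (m n : ℕ) (f : ℕ → ℕ) : ℝ≥0∞ :=
  (if f 1 ∈ Finset.Icc 1 m then (1 : ℝ≥0∞) / m else 0) *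
    ∏ k ∈ Finset.Icc 1 (n - 1),
      (if f (k + 1) ∈ Finset.Icc 1 m ∧ f (k + 1) ≠ f k then (1 : ℝ≥0∞) / (m - 1) else 0)

/-- extend a tuple to a function on ℕ (1-indexed) -/
def extv (n : ℕ) (v : Fin n → ℕ) (k : ℕ) : ℕ := if h : k - 1 < n then v ⟨k - 1, h⟩ else 0

lemma extv_eq (n : ℕ) (v : Fin n → ℕ) (k : ℕ) (h : k - 1 < n) :
    extv n v k = v ⟨k - 1, h⟩ := dif_pos h

noncomputable def cnd (p : Prop) (x : ℝ≥0∞) : ℝ≥0∞ :=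
  @ite _ p (Classical.propDecidable p) x 0

lemma cnd_pos {p : Prop} (h : p) {x : ℝ≥0∞} : cnd p x = x := if_pos h

lemma cnd_neg {p : Prop} (h : ¬ p) {x : ℝ≥0∞} : cnd p x = 0 := if_neg h

lemma W_mem {m n : ℕ} {f : ℕ → ℕ} (hn : 1 ≤ n) (h : W m n f ≠ 0) :
    (∀ t, 1 ≤ t → t ≤ n → f t ∈ Finset.Icc 1 m) ∧
      (∀ k, 1 ≤ k → k ≤ n - 1 → f (k + 1) ≠ f k) := by
  rw [W, mul_ne_zero_iff, Finset.prod_ne_zero_iff] at h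
  obtain ⟨h1, h2⟩ := h
  have hf1 : f 1 ∈ Finset.Icc 1 m := by
    by_contra hc; simp [hc] at h1
  have hstep : ∀ k, 1 ≤ k → k ≤ n - 1 → f (k + 1) ∈ Finset.Icc 1 m ∧ f (k + 1) ≠ f k := by
    intro k hk1 hk2
    have := h2 k (Finset.mem_Icc.mpr ⟨hk1, hk2⟩)
    by_contra hc; simp only [ne_eq] at hc; rw [if_neg hc] at this; exact this rfl
  refine ⟨?_, fun k hk1 hk2 => (hstep k hk1 hk2).2⟩
  intro t ht1 htn
  rcases Nat.lt_or_ge t 2 with h | h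
  · have : t = 1 := by omega
    rwa [this]
  · have e : t = (t - 1) + 1 := by omega
    rw [e]; exact (hstep (t - 1) (by omega) (by omega)).1

lemma cylSum (μ : Measure Ω) (m : ℕ) (X : ℕ → Ω → ℕ) (hX : ∀ k, Measurable (X k))
    (hLaw : ∀ n, 1 ≤ n → ∀ f : ℕ → ℕ,
      μ {ω | ∀ k, 1 ≤ k → k ≤ n → X k ω = f k} = W m n f)
    (n : ℕ) (hn : 1 ≤ n) (Q : (ℕ → ℕ) → Prop)
    (hQ : ∀ f g : ℕ → ℕ, (∀ k, 1 ≤ k → k ≤ n → f k = g k) → Q f → Q g) :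
    μ {ω | Q fun k => X k ω} =
      ∑' v : Fin n → ℕ, cnd (Q (extv n v)) (W m n (extv n v)) := by
  classical
  set T : Ω → (Fin n → ℕ) := fun ω q => X ((q : ℕ) + 1) ω with hT
  have hTv : ∀ ω, ∀ k, 1 ≤ k → k ≤ n → X k ω = extv n (T ω) k := by
    intro ω k h1 h2
    have hk : k - 1 < n := by omega
    rw [extv_eq n _ k hk, hT]
    simp only
    congr 1
    omega
  have hpre : ∀ v : Fin n → ℕ,
      T ⁻¹' {v} = {ω | ∀ k, 1 ≤ k → k ≤ n → X k ω = extv n v k} := by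
    intro v
    ext ω
    simp only [Set.mem_preimage, Set.mem_singleton_iff, Set.mem_setOf_eq]
    constructor
    · intro h k h1 h2; rw [← h]; exact hTv ω k h1 h2
    · intro h
      funext q
      have hq : (q : ℕ) + 1 - 1 < n := by simpa using q.isLt
      have := h ((q : ℕ) + 1) (by omega) (by omega)
      rw [extv_eq n v _ hq] at this
      rw [hT]; simp only
      rw [this]
      congr 1
  have hset : {ω | Q fun k => X k ω} =
      ⋃ v : Fin n → ℕ, if Q (extv n v) then T ⁻¹' {v} else ∅ := by
    ext ω
    simp only [Set.mem_setOf_eq, Set.mem_iUnion]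
    constructor
    · intro h
      refine ⟨T ω, ?_⟩
      have hq : Q (extv n (T ω)) := hQ _ _ (fun k h1 h2 => hTv ω k h1 h2) h
      rw [if_pos hq]
      exact rfl
    · rintro ⟨v, hv⟩
      by_cases hq : Q (extv n v)
      · rw [if_pos hq] at hv
        have hTe : T ω = v := hv
        refine hQ _ _ ?_ hq
        intro k h1 h2
        rw [← hTe]
        exact (hTv ω k h1 h2).symm
      · rw [if_neg hq] at hv; exact absurd hv (Set.notMem_empty ω)
  have hmT : Measurable T := measurable_pi_lambda _ (fun q => hX _)
  rw [hset, measure_iUnion]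
  · apply tsum_congr
    intro v
    by_cases hq : Q (extv n v)
    · rw [if_pos hq, cnd_pos hq, hpre v, hLaw n hn (extv n v)]
    · rw [if_neg hq, cnd_neg hq, measure_empty]
  · intro v w hvw
    simp only [Function.onFun]
    by_cases hv : Q (extv n v)
    · by_cases hw : Q (extv n w)
      · rw [if_pos hv, if_pos hw, Set.disjoint_left]
        intro ω h1 h2
        simp only [Set.mem_preimage, Set.mem_singleton_iff] at h1 h2
        exact hvw (h1 ▸ h2 ▸ rfl)
      · simp [hw]
    · simp [hv]
  · intro v
    by_cases hq : Q (extv n v)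
    · rw [if_pos hq]; exact hmT (measurableSet_singleton v)
    · rw [if_neg hq]; exact MeasurableSet.empty


lemma meas_X1 (μ : Measure Ω) (m : ℕ) (X : ℕ → Ω → ℕ)
    (hLaw : ∀ n, 1 ≤ n → ∀ f : ℕ → ℕ,
      μ {ω | ∀ k, 1 ≤ k → k ≤ n → X k ω = f k} = W m n f) (i : ℕ) :
    μ {ω | X 1 ω = i} = if i ∈ Finset.Icc 1 m then (1 : ℝ≥0∞) / m else 0 := by
  have h := hLaw 1 le_rfl (fun _ => i)
  have hs : {ω | ∀ k, 1 ≤ k → k ≤ 1 → X k ω = i} = {ω | X 1 ω = i} := by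
    ext ω
    simp only [Set.mem_setOf_eq]
    constructor
    · intro h'; exact h' 1 le_rfl le_rfl
    · intro h' k h1 h2
      have : k = 1 := by omega
      rwa [this]
  rw [hs] at h
  rw [h, W]
  simp

lemma meas_X12 (μ : Measure Ω) (m : ℕ) (X : ℕ → Ω → ℕ)
    (hLaw : ∀ n, 1 ≤ n → ∀ f : ℕ → ℕ,
      μ {ω | ∀ k, 1 ≤ k → k ≤ n → X k ω = f k} = W m n f)
    (i j : ℕ) (hi : i ∈ Finset.Icc 1 m) (hj : j ∈ Finset.Icc 1 m) (hij : j ≠ i) :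
    μ {ω | X 1 ω = i ∧ X 2 ω = j} = ((1 : ℝ≥0∞) / m) * ((1 : ℝ≥0∞) / (m - 1)) := by
  have h := hLaw 2 (by omega) (fun k => if k = 1 then i else j)
  have hs : {ω | ∀ k, 1 ≤ k → k ≤ 2 → X k ω = if k = 1 then i else j} =
      {ω | X 1 ω = i ∧ X 2 ω = j} := by
    ext ω
    simp only [Set.mem_setOf_eq]
    constructor
    · intro h'
      refine ⟨by simpa using h' 1 le_rfl (by omega), by simpa using h' 2 (by omega) le_rfl⟩
    · rintro ⟨h1, h2⟩ k hk1 hk2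
      interval_cases k
      · simpa using h1
      · simpa using h2
  rw [hs] at h
  rw [h, W]
  rw [Finset.mem_Icc] at hi hj
  norm_num [hi, hj, hij]

def glue (ℓ d : ℕ) (g : Fin (ℓ + 1) → ℕ) (h : Fin d → ℕ) (q : Fin (ℓ + 1 + d)) : ℕ :=
  if hq : (q : ℕ) < ℓ + 1 then g ⟨q, hq⟩ else h ⟨(q : ℕ) - (ℓ + 1), by have := q.isLt; omega⟩

def glueEquiv (ℓ d : ℕ) : ((Fin (ℓ + 1) → ℕ) × (Fin d → ℕ)) ≃ (Fin (ℓ + 1 + d) → ℕ) where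
  toFun p := glue ℓ d p.1 p.2
  invFun v := (fun q => v ⟨q, by have := q.isLt; omega⟩,
               fun q => v ⟨(q : ℕ) + (ℓ + 1), by have := q.isLt; omega⟩)
  left_inv := by
    rintro ⟨g, h⟩
    refine Prod.ext ?_ ?_
    · funext q
      simp only [glue]
      rw [dif_pos q.isLt]
    · funext q
      simp only [glue]
      rw [dif_neg (by omega)]
      congr 1
      exact Fin.ext (by simp)
  right_inv := by
    intro v
    funext q
    simp only [glue]
    by_cases hq : (q : ℕ) < ℓ + 1
    · rw [dif_pos hq]
    · rw [dif_neg hq]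
      congr 1
      exact Fin.ext (by simp; omega)


lemma W_split (m ℓ d : ℕ) (hm : 2 ≤ m) (V G H : ℕ → ℕ)
    (hG : ∀ k, 1 ≤ k → k ≤ ℓ + 1 → G k = V k)
    (hH : ∀ k, 1 ≤ k → k ≤ d + 1 → H k = V (k + ℓ))
    (hH1 : H 1 ∈ Finset.Icc 1 m) :
    W m (ℓ + 1 + d) V = (m : ℝ≥0∞) * W m (ℓ + 1) G * W m (d + 1) H := by
  have hm0 : (m : ℝ≥0∞) ≠ 0 := by
    simp only [ne_eq, Nat.cast_eq_zero]; omega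
  have hmm : (m : ℝ≥0∞) * ((1 : ℝ≥0∞) / m) = 1 := by
    rw [one_div, ENNReal.mul_inv_cancel hm0 (ENNReal.natCast_ne_top m)]
  unfold W
  have e1 : ℓ + 1 + d - 1 = ℓ + d := by omega
  have e2 : ℓ + 1 - 1 = ℓ := by omega
  have e3 : d + 1 - 1 = d := by omega
  rw [e1, e2, e3, if_pos hH1]
  have hIoc : ∀ x : ℕ, Finset.Icc 1 x = Finset.Ioc 0 x := by
    intro x; rw [← Finset.Icc_add_one_left_eq_Ioc, zero_add]
  set F : ℕ → ℝ≥0∞ := fun k =>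
    if V (k + 1) ∈ Finset.Icc 1 m ∧ V (k + 1) ≠ V k then (1 : ℝ≥0∞) / (m - 1) else 0 with hF
  have hsplit : ∏ k ∈ Finset.Icc 1 (ℓ + d), F k =
      (∏ k ∈ Finset.Icc 1 ℓ, F k) * ∏ k ∈ Finset.Ioc ℓ (ℓ + d), F k := by
    rw [hIoc, hIoc, Finset.prod_Ioc_consecutive _ (Nat.zero_le ℓ) (Nat.le_add_right ℓ d)]
  have hmap : ∏ k ∈ Finset.Ioc ℓ (ℓ + d), F k = ∏ k ∈ Finset.Ioc 0 d, F (ℓ + k) := by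
    have : Finset.Ioc ℓ (ℓ + d) = (Finset.Ioc 0 d).map (addLeftEmbedding ℓ) := by
      rw [Finset.map_add_left_Ioc, Nat.add_zero]
    rw [this, Finset.prod_map]
    rfl
  have hGprod : ∏ k ∈ Finset.Icc 1 ℓ,
      (if G (k + 1) ∈ Finset.Icc 1 m ∧ G (k + 1) ≠ G k then (1 : ℝ≥0∞) / (m - 1) else 0) =
      ∏ k ∈ Finset.Icc 1 ℓ, F k := by
    refine Finset.prod_congr rfl ?_
    intro k hk
    rw [Finset.mem_Icc] at hk
    rw [hG (k + 1) (by omega) (by omega), hG k (by omega) (by omega)]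
  have hHprod : ∏ k ∈ Finset.Icc 1 d,
      (if H (k + 1) ∈ Finset.Icc 1 m ∧ H (k + 1) ≠ H k then (1 : ℝ≥0∞) / (m - 1) else 0) =
      ∏ k ∈ Finset.Ioc 0 d, F (ℓ + k) := by
    rw [hIoc]
    refine Finset.prod_congr rfl ?_
    intro k hk
    rw [Finset.mem_Ioc] at hk
    rw [hH (k + 1) (by omega) (by omega), hH k (by omega) (by omega), hF]
    simp only
    have e4 : k + 1 + ℓ = ℓ + k + 1 := by omega
    have e5 : k + ℓ = ℓ + k := by omega
    rw [e4, e5]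
  rw [hsplit, hmap, hGprod, hHprod, hG 1 (by omega) (by omega)]
  calc (if V 1 ∈ Finset.Icc 1 m then (1:ℝ≥0∞)/m else 0) *
        ((∏ k ∈ Finset.Icc 1 ℓ, F k) * ∏ k ∈ Finset.Ioc 0 d, F (ℓ + k))
      = ((m : ℝ≥0∞) * ((1:ℝ≥0∞)/m)) * ((if V 1 ∈ Finset.Icc 1 m then (1:ℝ≥0∞)/m else 0) *
          ((∏ k ∈ Finset.Icc 1 ℓ, F k) * ∏ k ∈ Finset.Ioc 0 d, F (ℓ + k))) := by
        rw [hmm, one_mul]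
    _ = (m : ℝ≥0∞) * ((if V 1 ∈ Finset.Icc 1 m then (1:ℝ≥0∞)/m else 0) *
          ∏ k ∈ Finset.Icc 1 ℓ, F k) * ((1:ℝ≥0∞)/m * ∏ k ∈ Finset.Ioc 0 d, F (ℓ + k)) := by
        ring

lemma tsum_glue (ℓ d : ℕ) (j : ℕ) (c : ℝ≥0∞) (F : (Fin (ℓ + 1 + d) → ℕ) → ℝ≥0∞)
    (a : (Fin (ℓ + 1) → ℕ) → ℝ≥0∞) (b : (Fin (d + 1) → ℕ) → ℝ≥0∞)
    (hb : ∀ (x : ℕ) (h' : Fin d → ℕ), x ≠ j → b (Fin.cons x h') = 0)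
    (hkey : ∀ g h', F (glueEquiv ℓ d (g, h')) = c * a g * b (Fin.cons j h')) :
    ∑' v : Fin (ℓ + 1 + d) → ℕ, F v = c * (∑' g, a g) * (∑' h, b h) := by
  have hbsum : ∑' h : Fin (d + 1) → ℕ, b h = ∑' h' : Fin d → ℕ, b (Fin.cons j h') := by
    rw [← Equiv.tsum_eq (Fin.consEquiv fun _ : Fin (d + 1) => ℕ) b, ENNReal.tsum_prod']
    rw [tsum_eq_single j]
    · rfl
    · intro x hx
      refine ENNReal.tsum_eq_zero.mpr fun h' => ?_
      exact hb x h' hx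
  calc ∑' v : Fin (ℓ + 1 + d) → ℕ, F v
      = ∑' p : (Fin (ℓ + 1) → ℕ) × (Fin d → ℕ), F (glueEquiv ℓ d p) :=
        (Equiv.tsum_eq (glueEquiv ℓ d) F).symm
    _ = ∑' g, ∑' h', F (glueEquiv ℓ d (g, h')) := ENNReal.tsum_prod'
    _ = ∑' g, ∑' h', (c * a g) * b (Fin.cons j h') := by
        exact tsum_congr fun g => tsum_congr fun h' => hkey g h'
    _ = ∑' g, (c * a g) * ∑' h', b (Fin.cons j h') := by
        exact tsum_congr fun g => ENNReal.tsum_mul_left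
    _ = (∑' g, c * a g) * ∑' h', b (Fin.cons j h') := ENNReal.tsum_mul_right
    _ = c * (∑' g, a g) * ∑' h', b (Fin.cons j h') := by rw [ENNReal.tsum_mul_left]
    _ = c * (∑' g, a g) * ∑' h, b h := by rw [hbsum]

lemma extv_cons_one (d : ℕ) (x : ℕ) (h' : Fin d → ℕ) :
    extv (d + 1) (Fin.cons x h') 1 = x := by
  rw [extv_eq _ _ 1 (by omega)]
  rfl

lemma extv_cons_succ (d : ℕ) (x : ℕ) (h' : Fin d → ℕ) (k : ℕ) (h2 : 2 ≤ k) (hd : k ≤ d + 1) :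
    extv (d + 1) (Fin.cons x h') k = h' ⟨k - 2, by omega⟩ := by
  rw [extv_eq _ _ k (by omega)]
  have : (⟨k - 1, by omega⟩ : Fin (d + 1)) = Fin.succ ⟨k - 2, by omega⟩ := Fin.ext (by simp; omega)
  rw [this, Fin.cons_succ]


lemma markov (μ : Measure Ω) (m : ℕ) (hm : 2 ≤ m)
    (X : ℕ → Ω → ℕ) (hX : ∀ k, Measurable (X k))
    (hLaw : ∀ n, 1 ≤ n → ∀ f : ℕ → ℕ,
      μ {ω | ∀ k, 1 ≤ k → k ≤ n → X k ω = f k} = W m n f)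
    (ℓ d : ℕ) (hℓ : 1 ≤ ℓ) (j : ℕ) (hj : j ∈ Finset.Icc 1 m)
    (P Q : (ℕ → ℕ) → Prop)
    (hP : ∀ f g, (∀ k, 1 ≤ k → k ≤ ℓ + 1 → f k = g k) → P f → P g)
    (hQ : ∀ f g, (∀ k, 1 ≤ k → k ≤ d + 1 → f k = g k) → Q f → Q g) :
    μ {ω | P (fun k => X k ω) ∧ X (ℓ + 1) ω = j ∧ Q (fun k => X (k + ℓ) ω)} =
      (m : ℝ≥0∞) * μ {ω | P (fun k => X k ω) ∧ X (ℓ + 1) ω = j} *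
        μ {ω | Q (fun k => X k ω) ∧ X 1 ω = j} := by
  classical
  have hL := cylSum μ m X hX hLaw (ℓ + 1 + d) (by omega)
    (fun f => P f ∧ f (ℓ + 1) = j ∧ Q (fun k => f (k + ℓ)))
    (by
      rintro f g hagree ⟨h1, h2, h3⟩
      refine ⟨hP f g (fun k hk1 hk2 => hagree k hk1 (by omega)) h1, ?_, ?_⟩
      · rw [← hagree (ℓ + 1) (by omega) (by omega)]; exact h2
      · exact hQ _ _ (fun k hk1 hk2 => hagree (k + ℓ) (by omega) (by omega)) h3)
  have hM := cylSum μ m X hX hLaw (ℓ + 1) (by omega)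
    (fun f => P f ∧ f (ℓ + 1) = j)
    (by
      rintro f g hagree ⟨h1, h2⟩
      refine ⟨hP f g (fun k hk1 hk2 => hagree k hk1 hk2) h1, ?_⟩
      rw [← hagree (ℓ + 1) (by omega) (by omega)]; exact h2)
  have hR := cylSum μ m X hX hLaw (d + 1) (by omega)
    (fun f => Q f ∧ f 1 = j)
    (by
      rintro f g hagree ⟨h1, h2⟩
      refine ⟨hQ f g (fun k hk1 hk2 => hagree k hk1 hk2) h1, ?_⟩
      rw [← hagree 1 (by omega) (by omega)]; exact h2)
  rw [hL, hM, hR]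
  refine tsum_glue ℓ d j m _ _ _ ?_ ?_
  · intro x h' hx
    refine cnd_neg ?_
    rintro ⟨-, h2⟩
    rw [extv_cons_one] at h2
    exact hx h2
  · intro g h'
    beta_reduce
    set V : ℕ → ℕ := extv (ℓ + 1 + d) (glueEquiv ℓ d (g, h')) with hV
    set G : ℕ → ℕ := extv (ℓ + 1) g with hG
    set H : ℕ → ℕ := extv (d + 1) (Fin.cons j h') with hH
    have f1 : ∀ k, 1 ≤ k → k ≤ ℓ + 1 → G k = V k := by
      intro k hk1 hk2
      rw [hG, hV, extv_eq (ℓ + 1) g k (by omega), extv_eq _ _ k (by omega)]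
      show g _ = glue ℓ d g h' _
      rw [glue, dif_pos]
    have f3 : H 1 = j := extv_cons_one d j h'
    have f2 : ∀ k, 2 ≤ k → k ≤ d + 1 → H k = V (k + ℓ) := by
      intro k hk1 hk2
      rw [hH, hV, extv_cons_succ d j h' k hk1 hk2, extv_eq _ _ (k + ℓ) (by omega)]
      show h' _ = glue ℓ d g h' _
      rw [glue, dif_neg (by simp; omega)]
      congr 1
      exact Fin.ext (by simp; omega)
    have f4 : G (ℓ + 1) = V (ℓ + 1) := f1 (ℓ + 1) (by omega) le_rfl
    by_cases hVj : V (ℓ + 1) = j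
    · have hPiff : P V ↔ P G :=
        ⟨hP V G (fun k hk1 hk2 => (f1 k hk1 hk2).symm), hP G V f1⟩
      have hagQ : ∀ k, 1 ≤ k → k ≤ d + 1 → V (k + ℓ) = H k := by
        intro k hk1 hk2
        rcases Nat.lt_or_ge k 2 with h | h
        · have : k = 1 := by omega
          subst this
          rw [f3, show 1 + ℓ = ℓ + 1 from by omega, hVj]
        · exact (f2 k h hk2).symm
      have hQiff : Q (fun k => V (k + ℓ)) ↔ Q H :=
        ⟨hQ _ H hagQ, hQ H _ (fun k hk1 hk2 => (hagQ k hk1 hk2).symm)⟩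
      by_cases hPQ : P V ∧ Q (fun k => V (k + ℓ))
      · rw [cnd_pos ⟨hPQ.1, hVj, hPQ.2⟩, cnd_pos ⟨hPiff.mp hPQ.1, f4.trans hVj⟩,
          cnd_pos ⟨hQiff.mp hPQ.2, f3⟩]
        have hws := W_split m ℓ d hm V G H f1
          (fun k hk1 hk2 => (hagQ k hk1 hk2).symm) (f3 ▸ hj)
        rw [hws]
      · have hL0 : ¬ (P V ∧ V (ℓ + 1) = j ∧ Q fun k => V (k + ℓ)) :=
          fun hc => hPQ ⟨hc.1, hc.2.2⟩
        rw [cnd_neg hL0]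
        rcases not_and_or.mp hPQ with hnp | hnq
        · have h20 : ¬ (P G ∧ G (ℓ + 1) = j) := fun hc => hnp (hPiff.mpr hc.1)
          rw [cnd_neg h20]
          simp
        · have h30 : ¬ (Q H ∧ H 1 = j) := fun hc => hnq (hQiff.mpr hc.1)
          rw [cnd_neg h30]
          simp
    · have hL0 : ¬ (P V ∧ V (ℓ + 1) = j ∧ Q fun k => V (k + ℓ)) := fun hc => hVj hc.2.1
      have h20 : ¬ (P G ∧ G (ℓ + 1) = j) := fun hc => hVj (f4.symm.trans hc.2)
      rw [cnd_neg hL0, cnd_neg h20]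
      simp


lemma pattern_zero (μ : Measure Ω) (m : ℕ) (X : ℕ → Ω → ℕ) (hX : ∀ k, Measurable (X k))
    (hLaw : ∀ n, 1 ≤ n → ∀ f : ℕ → ℕ,
      μ {ω | ∀ k, 1 ≤ k → k ≤ n → X k ω = f k} = W m n f)
    (n : ℕ) (hn : 1 ≤ n) (Q : (ℕ → ℕ) → Prop)
    (hQ : ∀ f g : ℕ → ℕ, (∀ k, 1 ≤ k → k ≤ n → f k = g k) → Q f → Q g)
    (k0 : ℕ) (hk0 : 1 ≤ k0) (hk0n : k0 ≤ n) (j : ℕ) (hj : j ∉ Finset.Icc 1 m)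
    (hQj : ∀ f, Q f → f k0 = j) :
    μ {ω | Q fun k => X k ω} = 0 := by
  rw [cylSum μ m X hX hLaw n hn Q hQ]
  refine ENNReal.tsum_eq_zero.mpr fun v => ?_
  by_cases hq : Q (extv n v)
  · rw [cnd_pos hq]
    by_contra hW
    exact hj ((hQj _ hq) ▸ (W_mem hn hW).1 k0 hk0 hk0n)
  · rw [cnd_neg hq]

lemma sum_choose_range (N t : ℕ) : ∑ u ∈ Finset.range N, u.choose t = N.choose (t + 1) := by
  induction N with
  | zero => simp
  | succ N ih =>
    rw [Finset.sum_range_succ, ih, Nat.choose_succ_succ]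
    simp [Nat.succ_eq_add_one]
    omega

lemma sum_choose_Ioc (m i t : ℕ) :
    ∑ j ∈ Finset.Ioc i m, (m - j).choose t = (m - i).choose (t + 1) := by
  rcases Nat.lt_or_ge i m with h | h
  · rw [← sum_choose_range (m - i) t]
    refine Finset.sum_nbij' (fun j => m - j) (fun u => m - u) ?_ ?_ ?_ ?_ ?_
    · intro j hj
      rw [Finset.mem_Ioc] at hj
      rw [Finset.mem_range]
      try dsimp only
      omega
    · intro u hu
      rw [Finset.mem_range] at hu
      rw [Finset.mem_Ioc]
      try dsimp only
      omega
    · intro j hj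
      rw [Finset.mem_Ioc] at hj
      try dsimp only
      omega
    · intro u hu
      rw [Finset.mem_range] at hu
      try dsimp only
      omega
    · intro j hj
      rfl
  · rw [Finset.Ioc_eq_empty (by omega), Finset.sum_empty,
      Nat.choose_eq_zero_of_lt (by omega)]

lemma asc_measure (μ : Measure Ω) (m : ℕ) (hm : 2 ≤ m)
    (X : ℕ → Ω → ℕ) (hX : ∀ k, Measurable (X k))
    (hLaw : ∀ n, 1 ≤ n → ∀ f : ℕ → ℕ,
      μ {ω | ∀ k, 1 ≤ k → k ≤ n → X k ω = f k} = W m n f) :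
    ∀ t, 1 ≤ t → ∀ i ∈ Finset.Icc 1 m,
      μ {ω | AscP t (fun k => X k ω) ∧ X 1 ω = i} =
        ((m - i).choose (t - 1) : ℝ≥0∞) * ((1 : ℝ≥0∞) / m) *
          ((1 : ℝ≥0∞) / ((m : ℝ≥0∞) - 1)) ^ (t - 1) := by
  intro t ht
  induction t, ht using Nat.le_induction with
  | base =>
    intro i hi
    have hs : {ω | AscP 1 (fun k => X k ω) ∧ X 1 ω = i} = {ω | X 1 ω = i} := by
      ext ω
      simp only [Set.mem_setOf_eq, AscP]
      constructor
      · exact fun h => h.2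
      · exact fun h => ⟨fun k hk1 hk2 => absurd (hk1.trans_lt hk2) (by omega), h⟩
    rw [hs, meas_X1 μ m X hLaw i, if_pos hi]
    simp
  | succ s hs ih =>
    intro i hi
    have hi' := Finset.mem_Icc.mp hi
    -- decompose over the second value j
    have hdec : μ {ω | AscP (s + 1) (fun k => X k ω) ∧ X 1 ω = i} =
        ∑' j : ℕ, μ {ω | ((fun k => X k ω) 1 = i ∧ i < j) ∧ (fun k => X k ω) (1 + 1) = j ∧
          AscP s (fun k => X (k + 1) ω)} := by
      have hA := cylSum μ m X hX hLaw (s + 1) (by omega)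
        (fun f => AscP (s + 1) f ∧ f 1 = i)
        (by
          rintro f g hagree ⟨h1, h2⟩
          constructor
          · intro k hk1 hk2
            rw [← hagree k hk1 (by omega), ← hagree (k + 1) (by omega) (by omega)]
            exact h1 k hk1 hk2
          · rw [← hagree 1 (by omega) (by omega)]; exact h2)
      have hB : ∀ j : ℕ, μ {ω | ((fun k => X k ω) 1 = i ∧ i < j) ∧ (fun k => X k ω) (1 + 1) = j ∧
          AscP s (fun k => X (k + 1) ω)} =
          ∑' v : Fin (s + 1) → ℕ,
            cnd ((extv (s + 1) v 1 = i ∧ i < j) ∧ extv (s + 1) v (1 + 1) = j ∧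
                AscP s (fun k => extv (s + 1) v (k + 1)))
              (W m (s + 1) (extv (s + 1) v)) := by
        intro j
        exact cylSum μ m X hX hLaw (s + 1) (by omega)
          (fun f => (f 1 = i ∧ i < j) ∧ f (1 + 1) = j ∧ AscP s (fun k => f (k + 1)))
          (by
            rintro f g hagree ⟨⟨h1, h1'⟩, h2, h3⟩
            refine ⟨⟨by rw [← hagree 1 (by omega) (by omega)]; exact h1, h1'⟩, ?_, ?_⟩
            · rw [← hagree 2 (by omega) (by omega)]; exact h2
            · intro k hk1 hk2
              show g (k + 1) < g (k + 1 + 1)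
              rw [← hagree (k + 1) (by omega) (by omega),
                ← hagree (k + 1 + 1) (by omega) (by omega)]
              exact h3 k hk1 hk2)
      rw [hA]
      rw [tsum_congr hB, ENNReal.tsum_comm]
      refine tsum_congr fun v => ?_
      set V : ℕ → ℕ := extv (s + 1) v with hV
      have hone : ∀ j : ℕ, j ≠ V (1 + 1) →
          cnd ((V 1 = i ∧ i < j) ∧ V (1 + 1) = j ∧ AscP s (fun k => V (k + 1)))
            (W m (s + 1) V) = 0 := by
        intro j hj
        refine cnd_neg ?_
        rintro ⟨-, h2, -⟩
        exact hj h2.symm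
      rw [tsum_eq_single (V (1 + 1)) hone]
      unfold cnd
      congr 1
      · -- propositional equivalence
        rw [eq_iff_iff]
        constructor
        · rintro ⟨h1, h2⟩
          refine ⟨⟨h2, ?_⟩, rfl, ?_⟩
          · rw [← h2]; exact h1 1 le_rfl (by omega)
          · intro k hk1 hk2
            have := h1 (k + 1) (by omega) (by omega)
            exact this
        · rintro ⟨⟨h1, h1'⟩, h2, h3⟩
          refine ⟨?_, h1⟩
          intro k hk1 hk2
          rcases Nat.lt_or_ge k 2 with h | h
          · have : k = 1 := by omega
            subst this
            rw [h1, h2]; exact h1'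
          · have := h3 (k - 1) (by omega) (by omega)
            have e : k - 1 + 1 = k := by omega
            rw [e] at this
            exact this
    rw [hdec]
    -- evaluate each term
    have hterm : ∀ j : ℕ, μ {ω | ((fun k => X k ω) 1 = i ∧ i < j) ∧ (fun k => X k ω) (1 + 1) = j ∧
        AscP s (fun k => X (k + 1) ω)} =
        if j ∈ Finset.Ioc i m then
          ((m - j).choose (s - 1) : ℝ≥0∞) * ((1 : ℝ≥0∞) / m) * ((1 : ℝ≥0∞) / m) *
            ((1 : ℝ≥0∞) / ((m : ℝ≥0∞) - 1)) ^ s * m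
        else 0 := by
      intro j
      by_cases hj : j ∈ Finset.Ioc i m
      · rw [if_pos hj]
        have hj' := Finset.mem_Ioc.mp hj
        have hjI : j ∈ Finset.Icc 1 m := Finset.mem_Icc.mpr ⟨by omega, hj'.2⟩
        have hmk := markov μ m hm X hX hLaw 1 (s - 1) le_rfl j hjI
          (fun f => f 1 = i ∧ i < j) (AscP s)
          (by
            rintro f g hagree ⟨h1, h2⟩
            exact ⟨by rw [← hagree 1 (by omega) (by omega)]; exact h1, h2⟩)
          (by
            intro f g hagree h1 k hk1 hk2
            rw [← hagree k hk1 (by omega), ← hagree (k + 1) (by omega) (by omega)]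
            exact h1 k hk1 hk2)
        rw [hmk]
        have h1 : μ {ω | ((fun k => X k ω) 1 = i ∧ i < j) ∧ X (1 + 1) ω = j} =
            ((1 : ℝ≥0∞) / m) * ((1 : ℝ≥0∞) / ((m : ℝ≥0∞) - 1)) := by
          have hset : {ω | ((fun k => X k ω) 1 = i ∧ i < j) ∧ X (1 + 1) ω = j} =
              {ω | X 1 ω = i ∧ X 2 ω = j} := by
            ext ω
            simp only [Set.mem_setOf_eq]
            constructor
            · rintro ⟨⟨ha, -⟩, hb⟩; exact ⟨ha, hb⟩
            · rintro ⟨ha, hb⟩; exact ⟨⟨ha, hj'.1⟩, hb⟩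
          rw [hset]
          exact meas_X12 μ m X hLaw i j hi hjI (by omega)
        have h2 : μ {ω | AscP s (fun k => X k ω) ∧ X 1 ω = j} =
            ((m - j).choose (s - 1) : ℝ≥0∞) * ((1 : ℝ≥0∞) / m) *
              ((1 : ℝ≥0∞) / ((m : ℝ≥0∞) - 1)) ^ (s - 1) := ih j hjI
        rw [h1, h2]
        have epow : ((1 : ℝ≥0∞) / ((m : ℝ≥0∞) - 1)) ^ s =
            ((1 : ℝ≥0∞) / ((m : ℝ≥0∞) - 1)) ^ (s - 1) * ((1 : ℝ≥0∞) / ((m : ℝ≥0∞) - 1)) := by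
          rw [← pow_succ, show s - 1 + 1 = s from by omega]
        rw [epow]
        ring
      · rw [if_neg hj]
        rw [Finset.mem_Ioc] at hj
        push_neg at hj
        by_cases hij : i < j
        · -- then j > m, outside range
          refine pattern_zero μ m X hX hLaw (s + 1) (by omega)
            (fun f => (f 1 = i ∧ i < j) ∧ f (1 + 1) = j ∧ AscP s (fun k => f (k + 1)))
            (by
              rintro f g hagree ⟨⟨h1, h1'⟩, h2, h3⟩
              refine ⟨⟨by rw [← hagree 1 (by omega) (by omega)]; exact h1, h1'⟩, ?_, ?_⟩
              · rw [← hagree 2 (by omega) (by omega)]; exact h2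
              · intro k hk1 hk2
                show g (k + 1) < g (k + 1 + 1)
                rw [← hagree (k + 1) (by omega) (by omega),
                  ← hagree (k + 1 + 1) (by omega) (by omega)]
                exact h3 k hk1 hk2)
            2 (by omega) (by omega) j
            (by
              rw [Finset.mem_Icc]
              have := hj hij
              omega)
            (fun f hf => hf.2.1)
        · -- event empty
          have : {ω | ((fun k => X k ω) 1 = i ∧ i < j) ∧ (fun k => X k ω) (1 + 1) = j ∧
              AscP s (fun k => X (k + 1) ω)} = ∅ := by
            ext ω
            simp only [Set.mem_setOf_eq, Set.mem_empty_iff_false, iff_false]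
            rintro ⟨⟨-, h⟩, -⟩
            exact hij h
          rw [this, measure_empty]
    rw [tsum_congr hterm]
    rw [tsum_eq_sum (s := Finset.Ioc i m) (fun j hj => if_neg hj)]
    rw [Finset.sum_congr rfl (fun j hj => if_pos hj)]
    -- now sum the constants
    have hC : ∀ j ∈ Finset.Ioc i m,
        ((m - j).choose (s - 1) : ℝ≥0∞) * ((1 : ℝ≥0∞) / m) * ((1 : ℝ≥0∞) / m) *
          ((1 : ℝ≥0∞) / ((m : ℝ≥0∞) - 1)) ^ s * m =
        ((m - j).choose (s - 1) : ℝ≥0∞) *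
          (((1 : ℝ≥0∞) / m) * ((1 : ℝ≥0∞) / ((m : ℝ≥0∞) - 1)) ^ s) := by
      intro j hj
      have hmm : ((1 : ℝ≥0∞) / m) * m = 1 := by
        rw [one_div, ENNReal.inv_mul_cancel (by simp; omega) (ENNReal.natCast_ne_top m)]
      calc ((m - j).choose (s - 1) : ℝ≥0∞) * ((1 : ℝ≥0∞) / m) * ((1 : ℝ≥0∞) / m) *
            ((1 : ℝ≥0∞) / ((m : ℝ≥0∞) - 1)) ^ s * m
          = (((1 : ℝ≥0∞) / m) * m) * (((m - j).choose (s - 1) : ℝ≥0∞) *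
              (((1 : ℝ≥0∞) / m) * ((1 : ℝ≥0∞) / ((m : ℝ≥0∞) - 1)) ^ s)) := by ring
        _ = ((m - j).choose (s - 1) : ℝ≥0∞) *
              (((1 : ℝ≥0∞) / m) * ((1 : ℝ≥0∞) / ((m : ℝ≥0∞) - 1)) ^ s) := by
            rw [hmm, one_mul]
    rw [Finset.sum_congr rfl hC, ← Finset.sum_mul]
    have hsum : ∑ j ∈ Finset.Ioc i m, ((m - j).choose (s - 1) : ℝ≥0∞) =
        ((m - i).choose s : ℝ≥0∞) := by
      rw [← Nat.cast_sum]
      congr 1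
      have := sum_choose_Ioc m i (s - 1)
      rwa [show s - 1 + 1 = s from by omega] at this
    rw [hsum]
    have e1 : s + 1 - 1 = s := by omega
    rw [e1]
    ring


lemma hit_decomp (μ : Measure Ω) (m : ℕ) (hm : 2 ≤ m)
    (X : ℕ → Ω → ℕ) (hX : ∀ k, Measurable (X k))
    (hLaw : ∀ n, 1 ≤ n → ∀ f : ℕ → ℕ,
      μ {ω | ∀ k, 1 ≤ k → k ≤ n → X k ω = f k} = W m n f)
    (r : ℕ) (hr2 : 2 ≤ r) (i : ℕ) (n : ℕ) (hrn : r ≤ n) :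
    μ {ω | HitP r n (fun k => X k ω) ∧ X 1 ω = i} =
      μ {ω | AscP r (fun k => X k ω) ∧ X 1 ω = i} +
      ∑ ℓ ∈ Finset.Icc 1 (r - 1), ∑' j : ℕ,
        μ {ω | (AscP ℓ (fun k => X k ω) ∧ X (ℓ + 1) ω < X ℓ ω ∧ X 1 ω = i) ∧
            X (ℓ + 1) ω = j ∧ HitP r (n - ℓ) (fun k => X (k + ℓ) ω)} := by
  classical
  have hn1 : 1 ≤ n := by omega
  have hH := cylSum μ m X hX hLaw n hn1 (fun f => HitP r n f ∧ f 1 = i)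
    (by
      rintro f g hagree ⟨⟨k, hk1, hk2, hk3⟩, h2⟩
      refine ⟨⟨k, hk1, hk2, fun s hs1 hs2 => ?_⟩, ?_⟩
      · rw [← hagree s (by omega) (by omega), ← hagree (s + 1) (by omega) (by omega)]
        exact hk3 s hs1 hs2
      · rw [← hagree 1 (by omega) (by omega)]; exact h2)
  have hA := cylSum μ m X hX hLaw n hn1 (fun f => AscP r f ∧ f 1 = i)
    (by
      rintro f g hagree ⟨h1, h2⟩
      refine ⟨fun k hk1 hk2 => ?_, ?_⟩
      · rw [← hagree k hk1 (by omega), ← hagree (k + 1) (by omega) (by omega)]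
        exact h1 k hk1 hk2
      · rw [← hagree 1 (by omega) (by omega)]; exact h2)
  have hE : ∀ ℓ ∈ Finset.Icc 1 (r - 1), ∀ j : ℕ,
      μ {ω | (AscP ℓ (fun k => X k ω) ∧ X (ℓ + 1) ω < X ℓ ω ∧ X 1 ω = i) ∧
          X (ℓ + 1) ω = j ∧ HitP r (n - ℓ) (fun k => X (k + ℓ) ω)} =
        ∑' v : Fin n → ℕ,
          cnd ((AscP ℓ (extv n v) ∧ extv n v (ℓ + 1) < extv n v ℓ ∧ extv n v 1 = i) ∧
              extv n v (ℓ + 1) = j ∧ HitP r (n - ℓ) (fun k => extv n v (k + ℓ)))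
            (W m n (extv n v)) := by
    intro ℓ hℓ j
    rw [Finset.mem_Icc] at hℓ
    exact cylSum μ m X hX hLaw n hn1
      (fun f => (AscP ℓ f ∧ f (ℓ + 1) < f ℓ ∧ f 1 = i) ∧
          f (ℓ + 1) = j ∧ HitP r (n - ℓ) (fun k => f (k + ℓ)))
      (by
        rintro f g hagree ⟨⟨h1, h2, h3⟩, h4, k, hk1, hk2, hk3⟩
        refine ⟨⟨fun k hk1 hk2 => ?_, ?_, ?_⟩, ?_, ⟨k, hk1, hk2, fun s hs1 hs2 => ?_⟩⟩
        · rw [← hagree k hk1 (by omega), ← hagree (k + 1) (by omega) (by omega)]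
          exact h1 k hk1 hk2
        · rw [← hagree (ℓ + 1) (by omega) (by omega), ← hagree ℓ (by omega) (by omega)]
          exact h2
        · rw [← hagree 1 (by omega) (by omega)]; exact h3
        · rw [← hagree (ℓ + 1) (by omega) (by omega)]; exact h4
        · show g (s + ℓ) < g (s + 1 + ℓ)
          rw [← hagree (s + ℓ) (by omega) (by omega),
            ← hagree (s + 1 + ℓ) (by omega) (by omega)]
          exact hk3 s hs1 hs2)
  rw [hH, hA]
  have step1 : ∑ ℓ ∈ Finset.Icc 1 (r - 1), ∑' j : ℕ,
      μ {ω | (AscP ℓ (fun k => X k ω) ∧ X (ℓ + 1) ω < X ℓ ω ∧ X 1 ω = i) ∧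
          X (ℓ + 1) ω = j ∧ HitP r (n - ℓ) (fun k => X (k + ℓ) ω)} =
      ∑' v : Fin n → ℕ, ∑ ℓ ∈ Finset.Icc 1 (r - 1), ∑' j : ℕ,
        cnd ((AscP ℓ (extv n v) ∧ extv n v (ℓ + 1) < extv n v ℓ ∧ extv n v 1 = i) ∧
            extv n v (ℓ + 1) = j ∧ HitP r (n - ℓ) (fun k => extv n v (k + ℓ)))
          (W m n (extv n v)) := by
    refine (Finset.sum_congr rfl (fun ℓ hℓ => ?_)).trans
      (Summable.tsum_finsetSum (fun ℓ _ => ENNReal.summable)).symm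
    rw [tsum_congr (fun j => hE ℓ hℓ j), ENNReal.tsum_comm]
  rw [step1, ← ENNReal.tsum_add]
  refine tsum_congr fun v => ?_
  set V : ℕ → ℕ := extv n v with hV
  have hcol : ∀ ℓ ∈ Finset.Icc 1 (r - 1), (∑' j : ℕ,
      cnd ((AscP ℓ V ∧ V (ℓ + 1) < V ℓ ∧ V 1 = i) ∧
          V (ℓ + 1) = j ∧ HitP r (n - ℓ) (fun k => V (k + ℓ))) (W m n V)) =
      cnd ((AscP ℓ V ∧ V (ℓ + 1) < V ℓ ∧ V 1 = i) ∧
          V (ℓ + 1) = V (ℓ + 1) ∧ HitP r (n - ℓ) (fun k => V (k + ℓ))) (W m n V) := by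
    intro ℓ hℓ
    refine tsum_eq_single (V (ℓ + 1)) fun j hj => ?_
    refine cnd_neg ?_
    rintro ⟨-, h2, -⟩
    exact hj h2.symm
  rw [Finset.sum_congr rfl hcol]
  by_cases hW : W m n V = 0
  · rw [hW]
    simp [cnd]
  · obtain ⟨hmem, hne⟩ := W_mem hn1 hW
    by_cases hHit : HitP r n V ∧ V 1 = i
    · rw [cnd_pos hHit]
      by_cases hAsc : AscP r V
      · rw [cnd_pos ⟨hAsc, hHit.2⟩]
        have hz : ∀ ℓ ∈ Finset.Icc 1 (r - 1),
            cnd ((AscP ℓ V ∧ V (ℓ + 1) < V ℓ ∧ V 1 = i) ∧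
              V (ℓ + 1) = V (ℓ + 1) ∧ HitP r (n - ℓ) (fun k => V (k + ℓ))) (W m n V) = 0 := by
          intro ℓ hℓ
          rw [Finset.mem_Icc] at hℓ
          refine cnd_neg ?_
          rintro ⟨⟨-, hlt, -⟩, -⟩
          have := hAsc ℓ hℓ.1 (by omega)
          omega
        rw [Finset.sum_eq_zero hz, add_zero]
      · rw [cnd_neg (fun hc => hAsc hc.1), zero_add]
        have hex : ∃ k, 1 ≤ k ∧ ¬ V k < V (k + 1) := by
          by_contra hc
          push_neg at hc
          exact hAsc fun k hk1 _ => hc k hk1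
        obtain ⟨ℓ₀, hp, hmin⟩ : ∃ ℓ₀, (1 ≤ ℓ₀ ∧ ¬ V ℓ₀ < V (ℓ₀ + 1)) ∧
            ∀ k < ℓ₀, ¬ (1 ≤ k ∧ ¬ V k < V (k + 1)) :=
          ⟨Nat.find hex, Nat.find_spec hex, fun k hk => Nat.find_min hex hk⟩
        have h1ℓ : 1 ≤ ℓ₀ := hp.1
        have hub : ℓ₀ ≤ r - 1 := by
          by_contra hc
          apply hAsc
          intro k hk1 hk2
          by_contra hc2
          exact hmin k (by omega) ⟨hk1, hc2⟩
        have hAscℓ : AscP ℓ₀ V := by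
          intro k hk1 hk2
          by_contra hc
          exact hmin k hk2 ⟨hk1, hc⟩
        have hdesc : V (ℓ₀ + 1) < V ℓ₀ := by
          have hne' := hne ℓ₀ h1ℓ (by omega)
          have := hp.2
          omega
        have hshift : HitP r (n - ℓ₀) fun k => V (k + ℓ₀) := by
          obtain ⟨k, hk1, hk2, hk3⟩ := hHit.1
          have hkl : ℓ₀ + r ≤ k := by
            by_contra hc
            have := hk3 ℓ₀ (by omega) (by omega)
            omega
          refine ⟨k - ℓ₀, by omega, by omega, fun s hs1 hs2 => ?_⟩
          show V (s + ℓ₀) < V (s + 1 + ℓ₀)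
          rw [show s + 1 + ℓ₀ = s + ℓ₀ + 1 from by omega]
          exact hk3 (s + ℓ₀) (by omega) (by omega)
        rw [Finset.sum_eq_single_of_mem ℓ₀ (Finset.mem_Icc.mpr ⟨h1ℓ, hub⟩)]
        · rw [cnd_pos ⟨⟨hAscℓ, hdesc, hHit.2⟩, rfl, hshift⟩]
        · intro ℓ hℓ hne'
          rw [Finset.mem_Icc] at hℓ
          refine cnd_neg ?_
          rintro ⟨⟨hAℓ, hdℓ, -⟩, -, -⟩
          rcases Nat.lt_or_ge ℓ ℓ₀ with h | h
          · have := hAscℓ ℓ hℓ.1 h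
            omega
          · have hlt : ℓ₀ < ℓ := by omega
            have := hAℓ ℓ₀ h1ℓ hlt
            omega
    · rw [cnd_neg hHit]
      have hz1 : cnd (AscP r V ∧ V 1 = i) (W m n V) = 0 := by
        refine cnd_neg fun hc => hHit ⟨⟨r, le_rfl, hrn, fun s hs1 hs2 => ?_⟩, hc.2⟩
        exact hc.1 s (by omega) (by omega)
      have hz2 : ∀ ℓ ∈ Finset.Icc 1 (r - 1),
          cnd ((AscP ℓ V ∧ V (ℓ + 1) < V ℓ ∧ V 1 = i) ∧
            V (ℓ + 1) = V (ℓ + 1) ∧ HitP r (n - ℓ) (fun k => V (k + ℓ))) (W m n V) = 0 := by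
        intro ℓ hℓ
        rw [Finset.mem_Icc] at hℓ
        refine cnd_neg ?_
        rintro ⟨⟨hAℓ, hdℓ, h1i⟩, -, k', hk1, hk2, hk3⟩
        refine hHit ⟨⟨k' + ℓ, by omega, by omega, fun s hs1 hs2 => ?_⟩, h1i⟩
        have hsl : ℓ + 1 ≤ s := by omega
        have h5 : V (s - ℓ + ℓ) < V (s - ℓ + 1 + ℓ) := hk3 (s - ℓ) (by omega) (by omega)
        rw [show s - ℓ + ℓ = s from by omega, show s - ℓ + 1 + ℓ = s + 1 from by omega] at h5
        exact h5
      rw [hz1, Finset.sum_eq_zero hz2, add_zero]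

end Aux

/-- The event {T_r ≤ n}: some ascending run of length at least r is completed by
time n, i.e. there is k with r ≤ k ≤ n and X_{k-r+1} < ... < X_k. -/
def hitEvent {Ω : Type*} (X : ℕ → Ω → ℕ) (r n : ℕ) : Set Ω :=
  {ω | ∃ k, r ≤ k ∧ k ≤ n ∧ ∀ s, k - r + 1 ≤ s → s < k → X s ω < X (s + 1) ω}

/-- For 2 ≤ r ≤ m, P(T_r ≤ n | X_1 = i) = 0 for 1 ≤ n ≤ r−1, and for
n ≥ r, P(T_r ≤ n | X_1 = i) = ψ_r(i) + ∑_{ℓ=1}^{r-1} ∑_{j=1}^m Φ_ℓ(i,j)·P(T_r ≤ n−ℓ | X_1 = j),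
where ψ_r(i) = C(m-i,r-1)/(m-1)^{r-1}·1_{m-i ≥ r-1} and
Φ_ℓ(i,j) = P(the first run has length ℓ and X_{ℓ+1} = j | X_1 = i). -/
theorem hitting_time_distribution {Ω : Type*} [MeasurableSpace Ω] (μ : Measure Ω)
    [IsProbabilityMeasure μ] (m : ℕ) (hm : 2 ≤ m) (X : ℕ → Ω → ℕ)
    (hX : ∀ k, Measurable (X k))
    (hLaw : ∀ n, 1 ≤ n → ∀ f : ℕ → ℕ,
      μ {ω | ∀ k, 1 ≤ k → k ≤ n → X k ω = f k} =
        (if f 1 ∈ Finset.Icc 1 m then (1 : ℝ≥0∞) / m else 0) *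
          ∏ k ∈ Finset.Icc 1 (n - 1),
            (if f (k + 1) ∈ Finset.Icc 1 m ∧ f (k + 1) ≠ f k then (1 : ℝ≥0∞) / (m - 1) else 0))
    (r : ℕ) (hr2 : 2 ≤ r) (hrm : r ≤ m) (i : ℕ) (hi : i ∈ Finset.Icc 1 m) (n : ℕ) :
    (1 ≤ n → n ≤ r - 1 → condP μ (hitEvent X r n) {ω | X 1 ω = i} = 0) ∧
    (r ≤ n → condP μ (hitEvent X r n) {ω | X 1 ω = i} =
      (if r - 1 ≤ m - i
        then (((m - i).choose (r - 1) : ℕ) : ℝ) / ((m - 1 : ℕ) : ℝ) ^ (r - 1) else 0)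
      + ∑ ℓ ∈ Finset.Icc 1 (r - 1), ∑ j ∈ Finset.Icc 1 m,
          condP μ {ω | (∀ k, 1 ≤ k → k < ℓ → X k ω < X (k + 1) ω) ∧
              X (ℓ + 1) ω = j ∧ X (ℓ + 1) ω < X ℓ ω} {ω | X 1 ω = i}
            * condP μ (hitEvent X r (n - ℓ)) {ω | X 1 ω = j}) := by
  classical
  have hLaw' : ∀ n, 1 ≤ n → ∀ f : ℕ → ℕ,
      μ {ω | ∀ k, 1 ≤ k → k ≤ n → X k ω = f k} = W m n f := hLaw
  have hmR0 : (m : ℝ) ≠ 0 := Nat.cast_ne_zero.mpr (by omega)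
  constructor
  · intro hn1 hnr
    have hempty : hitEvent X r n = ∅ := by
      ext ω
      simp only [hitEvent, Set.mem_setOf_eq, Set.mem_empty_iff_false, iff_false]
      rintro ⟨k, hk1, hk2, -⟩
      omega
    rw [condP, hempty]
    simp
  · intro hrn
    have hden : ∀ x ∈ Finset.Icc 1 m, (μ {ω | X 1 ω = x}).toReal = ((m : ℝ))⁻¹ := by
      intro x hx
      rw [meas_X1 μ m X hLaw' x, if_pos hx, ENNReal.toReal_div, ENNReal.toReal_one,
        ENNReal.toReal_natCast, one_div]
    -- the ENNReal-level decomposition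
    have hdec := hit_decomp μ m hm X hX hLaw' r hr2 i n hrn
    have hEdet : ∀ ℓ j : ℕ, 1 ≤ ℓ → ℓ ≤ r - 1 →
        (∀ f g : ℕ → ℕ, (∀ k, 1 ≤ k → k ≤ n → f k = g k) →
          ((AscP ℓ f ∧ f (ℓ + 1) < f ℓ ∧ f 1 = i) ∧
            f (ℓ + 1) = j ∧ HitP r (n - ℓ) fun k => f (k + ℓ)) →
          ((AscP ℓ g ∧ g (ℓ + 1) < g ℓ ∧ g 1 = i) ∧
            g (ℓ + 1) = j ∧ HitP r (n - ℓ) fun k => g (k + ℓ))) := by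
      intro ℓ j hℓ1 hℓ2
      rintro f g hagree ⟨⟨h1, h2, h3⟩, h4, k, hk1, hk2, hk3⟩
      refine ⟨⟨fun k hk1 hk2 => ?_, ?_, ?_⟩, ?_, ⟨k, hk1, hk2, fun s hs1 hs2 => ?_⟩⟩
      · rw [← hagree k hk1 (by omega), ← hagree (k + 1) (by omega) (by omega)]
        exact h1 k hk1 hk2
      · rw [← hagree (ℓ + 1) (by omega) (by omega), ← hagree ℓ (by omega) (by omega)]
        exact h2
      · rw [← hagree 1 (by omega) (by omega)]; exact h3
      · rw [← hagree (ℓ + 1) (by omega) (by omega)]; exact h4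
      · show g (s + ℓ) < g (s + 1 + ℓ)
        rw [← hagree (s + ℓ) (by omega) (by omega),
          ← hagree (s + 1 + ℓ) (by omega) (by omega)]
        exact hk3 s hs1 hs2
    have hEj : ∀ ℓ ∈ Finset.Icc 1 (r - 1), ∀ j ∉ Finset.Icc 1 m,
        μ {ω | (AscP ℓ (fun k => X k ω) ∧ X (ℓ + 1) ω < X ℓ ω ∧ X 1 ω = i) ∧
            X (ℓ + 1) ω = j ∧ HitP r (n - ℓ) (fun k => X (k + ℓ) ω)} = 0 := by
      intro ℓ hℓ j hj
      rw [Finset.mem_Icc] at hℓ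
      exact pattern_zero μ m X hX hLaw' n (by omega)
        (fun f => (AscP ℓ f ∧ f (ℓ + 1) < f ℓ ∧ f 1 = i) ∧
            f (ℓ + 1) = j ∧ HitP r (n - ℓ) fun k => f (k + ℓ))
        (hEdet ℓ j hℓ.1 hℓ.2) (ℓ + 1) (by omega) (by omega) j hj (fun f hf => hf.2.1)
    have hdec2 : μ {ω | HitP r n (fun k => X k ω) ∧ X 1 ω = i} =
        μ {ω | AscP r (fun k => X k ω) ∧ X 1 ω = i} +
        ∑ ℓ ∈ Finset.Icc 1 (r - 1), ∑ j ∈ Finset.Icc 1 m,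
          μ {ω | (AscP ℓ (fun k => X k ω) ∧ X (ℓ + 1) ω < X ℓ ω ∧ X 1 ω = i) ∧
              X (ℓ + 1) ω = j ∧ HitP r (n - ℓ) (fun k => X (k + ℓ) ω)} := by
      rw [hdec]
      congr 1
      exact Finset.sum_congr rfl fun ℓ hℓ => tsum_eq_sum (fun j hj => hEj ℓ hℓ j hj)
    -- set equalities
    have hRun : ∀ ℓ j : ℕ,
        {ω | (AscP ℓ (fun k => X k ω) ∧ X (ℓ + 1) ω < X ℓ ω ∧ X 1 ω = i) ∧ X (ℓ + 1) ω = j} =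
        {ω | (∀ k, 1 ≤ k → k < ℓ → X k ω < X (k + 1) ω) ∧
            X (ℓ + 1) ω = j ∧ X (ℓ + 1) ω < X ℓ ω} ∩ {ω | X 1 ω = i} := by
      intro ℓ j
      ext ω
      simp only [Set.mem_inter_iff, Set.mem_setOf_eq, AscP]
      tauto
    -- Markov per term
    have hmark : ∀ ℓ ∈ Finset.Icc 1 (r - 1), ∀ j ∈ Finset.Icc 1 m,
        μ {ω | (AscP ℓ (fun k => X k ω) ∧ X (ℓ + 1) ω < X ℓ ω ∧ X 1 ω = i) ∧
            X (ℓ + 1) ω = j ∧ HitP r (n - ℓ) (fun k => X (k + ℓ) ω)} =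
        (m : ℝ≥0∞) * μ ({ω | (∀ k, 1 ≤ k → k < ℓ → X k ω < X (k + 1) ω) ∧
            X (ℓ + 1) ω = j ∧ X (ℓ + 1) ω < X ℓ ω} ∩ {ω | X 1 ω = i}) *
          μ (hitEvent X r (n - ℓ) ∩ {ω | X 1 ω = j}) := by
      intro ℓ hℓ j hj
      rw [Finset.mem_Icc] at hℓ
      have h := markov μ m hm X hX hLaw' ℓ (n - ℓ - 1) hℓ.1 j hj
        (fun f => AscP ℓ f ∧ f (ℓ + 1) < f ℓ ∧ f 1 = i)
        (fun f => HitP r (n - ℓ) f)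
        (by
          rintro f g hagree ⟨h1, h2, h3⟩
          refine ⟨fun k hk1 hk2 => ?_, ?_, ?_⟩
          · rw [← hagree k hk1 (by omega), ← hagree (k + 1) (by omega) (by omega)]
            exact h1 k hk1 hk2
          · rw [← hagree (ℓ + 1) (by omega) (by omega), ← hagree ℓ (by omega) (by omega)]
            exact h2
          · rw [← hagree 1 (by omega) (by omega)]; exact h3)
        (by
          rintro f g hagree ⟨k, hk1, hk2, hk3⟩
          refine ⟨k, hk1, hk2, fun s hs1 hs2 => ?_⟩
          rw [← hagree s (by omega) (by omega), ← hagree (s + 1) (by omega) (by omega)]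
          exact hk3 s hs1 hs2)
      have h' : μ {ω | (AscP ℓ (fun k => X k ω) ∧ X (ℓ + 1) ω < X ℓ ω ∧ X 1 ω = i) ∧
            X (ℓ + 1) ω = j ∧ HitP r (n - ℓ) (fun k => X (k + ℓ) ω)} =
          (m : ℝ≥0∞) * μ {ω | (AscP ℓ (fun k => X k ω) ∧ X (ℓ + 1) ω < X ℓ ω ∧ X 1 ω = i) ∧
            X (ℓ + 1) ω = j} * μ (hitEvent X r (n - ℓ) ∩ {ω | X 1 ω = j}) := h
      rw [h', hRun ℓ j]
    have hdec3 : μ (hitEvent X r n ∩ {ω | X 1 ω = i}) =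
        μ {ω | AscP r (fun k => X k ω) ∧ X 1 ω = i} +
        ∑ ℓ ∈ Finset.Icc 1 (r - 1), ∑ j ∈ Finset.Icc 1 m,
          (m : ℝ≥0∞) * μ ({ω | (∀ k, 1 ≤ k → k < ℓ → X k ω < X (k + 1) ω) ∧
              X (ℓ + 1) ω = j ∧ X (ℓ + 1) ω < X ℓ ω} ∩ {ω | X 1 ω = i}) *
            μ (hitEvent X r (n - ℓ) ∩ {ω | X 1 ω = j}) := by
      refine hdec2.trans ?_
      congr 1
      exact Finset.sum_congr rfl fun ℓ hℓ => Finset.sum_congr rfl fun j hj => hmark ℓ hℓ j hj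
    -- pass to toReal
    have hterm_ne : ∀ ℓ ∈ Finset.Icc 1 (r - 1), ∀ j ∈ Finset.Icc 1 m,
        (m : ℝ≥0∞) * μ ({ω | (∀ k, 1 ≤ k → k < ℓ → X k ω < X (k + 1) ω) ∧
            X (ℓ + 1) ω = j ∧ X (ℓ + 1) ω < X ℓ ω} ∩ {ω | X 1 ω = i}) *
          μ (hitEvent X r (n - ℓ) ∩ {ω | X 1 ω = j}) ≠ ∞ := by
      intro ℓ _ j _
      exact ENNReal.mul_ne_top
        (ENNReal.mul_ne_top (ENNReal.natCast_ne_top m) (measure_ne_top μ _))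
        (measure_ne_top μ _)
    have hsum_ne : (∑ ℓ ∈ Finset.Icc 1 (r - 1), ∑ j ∈ Finset.Icc 1 m,
        (m : ℝ≥0∞) * μ ({ω | (∀ k, 1 ≤ k → k < ℓ → X k ω < X (k + 1) ω) ∧
            X (ℓ + 1) ω = j ∧ X (ℓ + 1) ω < X ℓ ω} ∩ {ω | X 1 ω = i}) *
          μ (hitEvent X r (n - ℓ) ∩ {ω | X 1 ω = j})) ≠ ∞ := by
      refine (ENNReal.sum_lt_top.mpr fun ℓ hℓ => ?_).ne
      exact ENNReal.sum_lt_top.mpr fun j hj => (hterm_ne ℓ hℓ j hj).lt_top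
    have hreal := congrArg ENNReal.toReal hdec3
    rw [ENNReal.toReal_add (measure_ne_top μ _) hsum_ne,
      ENNReal.toReal_sum (fun ℓ hℓ => (ENNReal.sum_lt_top.mpr
        fun j hj => (hterm_ne ℓ hℓ j hj).lt_top).ne)] at hreal
    rw [Finset.sum_congr rfl (fun ℓ hℓ =>
      ENNReal.toReal_sum (fun j hj => hterm_ne ℓ hℓ j hj))] at hreal
    simp only [ENNReal.toReal_mul, ENNReal.toReal_natCast] at hreal
    -- the ascending part
    have hAr : (μ {ω | AscP r (fun k => X k ω) ∧ X 1 ω = i}).toReal =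
        (((m - i).choose (r - 1) : ℕ) : ℝ) * ((m : ℝ))⁻¹ *
          (((m - 1 : ℕ) : ℝ))⁻¹ ^ (r - 1) := by
      rw [asc_measure μ m hm X hX hLaw' r (by omega) i hi]
      rw [show ((m : ℝ≥0∞) - 1) = ((m - 1 : ℕ) : ℝ≥0∞) from (ENNReal.natCast_sub m 1).symm ▸ (by norm_num)]
      simp only [ENNReal.toReal_mul, ENNReal.toReal_pow, ENNReal.toReal_div,
        ENNReal.toReal_one, ENNReal.toReal_natCast, one_div, ENNReal.toReal_inv]
    rw [hAr] at hreal
    -- final assembly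
    simp only [condP]
    simp only [hden i hi]
    rw [hreal]
    have hdiv : ∀ a : ℝ, a / ((m : ℝ))⁻¹ = a * m := fun a => by
      field_simp
    rw [hdiv, add_mul, Finset.sum_mul]
    congr 1
    · -- ψ part
      by_cases hcase : r - 1 ≤ m - i
      · rw [if_pos hcase, div_eq_mul_inv, ← inv_pow,
          show (((m - i).choose (r - 1) : ℕ) : ℝ) * ((m : ℝ))⁻¹ *
              (((m - 1 : ℕ) : ℝ))⁻¹ ^ (r - 1) * m =
            ((m : ℝ)⁻¹ * m) * ((((m - i).choose (r - 1) : ℕ) : ℝ) *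
              (((m - 1 : ℕ) : ℝ))⁻¹ ^ (r - 1)) from by ring,
          inv_mul_cancel₀ hmR0, one_mul]
      · rw [if_neg hcase, Nat.choose_eq_zero_of_lt (by omega)]
        simp
    · refine Finset.sum_congr rfl fun ℓ hℓ => ?_
      rw [Finset.sum_mul]
      refine Finset.sum_congr rfl fun j hj => ?_
      rw [hden j hj, hdiv, hdiv]
      ring
end

section
/- The process Y = (V_k, L_k)_{k≥1} of successive ascending runs (value of the first element and length of the k-th run) is a homogeneous Markov chain, with transition probabilities P((i,ℓ),(j,λ)) = Φ_ℓ(i,j)·φ_λ(j)/φ_ℓ(i) for (i,ℓ) ∈ E ∪ {(m,1)} and (j,λ) ∈ E. -/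
open MeasureTheory
open scoped ENNReal

/-- `runStart X ω k` is the starting position of the (k+1)-st maximal ascending run
of the sequence (X_n ω)_{n ≥ 1} (with X_0 = ∞): the first run starts at 1, and each
subsequent run starts at the first descent after the previous start. -/
noncomputable def runStart {Ω : Type*} (X : ℕ → Ω → ℕ) (ω : Ω) : ℕ → ℕ
  | 0 => 1
  | k + 1 => sInf {t | runStart X ω k < t ∧ X t ω < X (t - 1) ω}

/-- `V X k ω`: the value of the first element of the k-th ascending run. -/
noncomputable def V {Ω : Type*} (X : ℕ → Ω → ℕ) (k : ℕ) (ω : Ω) : ℕ :=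
  X (runStart X ω (k - 1)) ω

/-- `L X k ω`: the length of the k-th ascending run. -/
noncomputable def L {Ω : Type*} (X : ℕ → Ω → ℕ) (k : ℕ) (ω : Ω) : ℕ :=
  runStart X ω k - runStart X ω (k - 1)

namespace RunsAux
open scoped Classical


/-- initial weight -/
noncomputable def ini (m v : ℕ) : ℝ≥0∞ := if v ∈ Finset.Icc 1 m then (1 : ℝ≥0∞) / m else 0

/-- transition weight -/
noncomputable def w (m a b : ℕ) : ℝ≥0∞ :=
  if b ∈ Finset.Icc 1 m ∧ b ≠ a then (1 : ℝ≥0∞) / (m - 1) else 0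

/-- weight of a continuation list starting from current value `v` -/
noncomputable def wt (m : ℕ) : ℕ → List ℕ → ℝ≥0∞
  | _, [] => 1
  | v, x :: xs => w m v x * wt m x xs

lemma wt_append (m v : ℕ) (l₁ l₂ : List ℕ) :
    wt m v (l₁ ++ l₂) = wt m v l₁ * wt m (l₁.getLastD v) l₂ := by
  induction l₁ generalizing v with
  | nil => simp [wt]
  | cons x xs ih =>
      rw [List.cons_append, wt, wt, ih x, List.getLastD_cons, mul_assoc]

lemma getD_cons_length (v : ℕ) (l : List ℕ) : (v :: l).getD l.length 0 = l.getLastD v := by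
  induction l generalizing v with
  | nil => rfl
  | cons x xs ih =>
      rw [List.getLastD_cons, ← ih x]
      rfl

lemma getD_map_range (q i : ℕ) (g : ℕ → ℕ) :
    ((List.range q).map g).getD i 0 = if i < q then g i else 0 := by
  split
  · next hi =>
      rw [List.getD_eq_getElem _ _ (by simpa using hi)]
      simp
  · next hi => exact List.getD_eq_default _ _ (by simpa using Nat.le_of_not_lt hi)

lemma map_getD_range (l : List ℕ) : (List.range l.length).map (fun i => l.getD i 0) = l := by
  apply List.ext_getElem (by simp)
  intro i h1 h2
  simp [List.getD_eq_getElem _ _ h2, List.getElem?_eq_getElem h2]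

lemma wt_eq_prod (m q : ℕ) (c : ℕ → ℕ) :
    wt m (c 0) ((List.range q).map fun i => c (i + 1)) =
      ∏ i ∈ Finset.range q, w m (c i) (c (i + 1)) := by
  induction q with
  | zero => simp [wt]
  | succ q ih =>
      rw [List.range_succ, List.map_append, wt_append, Finset.prod_range_succ, ih]
      congr 1
      have h1 : (((List.range q).map fun i => c (i + 1)).getLastD (c 0)) = c q := by
        cases q with
        | zero => simp [List.getLastD]
        | succ q' =>
            rw [← getD_cons_length]
            rw [List.getD_eq_getElem _ _ (by simp)]
            simp
      rw [h1]
      show w m _ _ * wt m _ [] = _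
      simp [wt]

/-- position of the start of run `t+1`, given prescribed run data `h` -/
def sp (h : ℕ → ℕ × ℕ) : ℕ → ℕ
  | 0 => 1
  | t + 1 => sp h t + (h (t + 1)).2

lemma sp_pos (h : ℕ → ℕ × ℕ) (t : ℕ) : 1 ≤ sp h t := by
  induction t with
  | zero => exact le_refl 1
  | succ t ih => exact le_trans ih (Nat.le_add_right _ _)

lemma sp_mono (h : ℕ → ℕ × ℕ) {a b : ℕ} (hab : a ≤ b) : sp h a ≤ sp h b := by
  induction b with
  | zero => simpa [Nat.le_zero.mp hab]
  | succ b ih =>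
      rcases Nat.lt_or_ge a (b+1) with hlt | hge
      · exact le_trans (ih (Nat.lt_succ_iff.mp hlt)) (Nat.le_add_right _ _)
      · have : a = b + 1 := le_antisymm hab hge
        simp [this]

/-- history predicate on a path function -/
def HistF (h : ℕ → ℕ × ℕ) (k : ℕ) (f : ℕ → ℕ) : Prop :=
  ∀ t, 1 ≤ t → t ≤ k →
    f (sp h (t - 1)) = (h t).1 ∧
    (∀ u, sp h (t - 1) < u → u < sp h t → f (u - 1) ≤ f u) ∧
    f (sp h t) < f (sp h t - 1)

section Events
variable {Ω : Type*} (X : ℕ → Ω → ℕ) (ω : Ω)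

lemma runStart_eq_of_HistF (h : ℕ → ℕ × ℕ) (k : ℕ)
    (hl : ∀ t, 1 ≤ t → t ≤ k → 1 ≤ (h t).2)
    (H : HistF h k (fun t => X t ω)) :
    ∀ t, t ≤ k → runStart X ω t = sp h t := by
  intro t
  induction t with
  | zero => intro _; rfl
  | succ t ih =>
      intro htk
      have ht' : t ≤ k := Nat.le_of_succ_le htk
      have hrs := ih ht'
      obtain ⟨hv, hnd, hdesc⟩ := H (t+1) (Nat.succ_le_succ (Nat.zero_le t)) htk
      have hspt : sp h t = sp h (t + 1 - 1) := by simp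
      rw [runStart]
      have hlt : sp h t < sp h (t+1) := by
        have := hl (t+1) (Nat.succ_le_succ (Nat.zero_le t)) htk
        show sp h t < sp h t + (h (t+1)).2
        omega
      have hmem : sp h (t+1) ∈ {u | runStart X ω t < u ∧ X u ω < X (u - 1) ω} := by
        constructor
        · rw [hrs]; exact hlt
        · exact hdesc
      apply le_antisymm
      · exact Nat.sInf_le hmem
      · apply le_csInf ⟨_, hmem⟩
        intro b hb
        by_contra hcon
        push_neg at hcon
        have hb1 : sp h t < b := by rw [← hrs]; exact hb.1
        have h2 : X (b - 1) ω ≤ X b ω := hnd b (by rw [hspt] at hb1; exact hb1) (by omega)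
        have h3 := hb.2
        omega

lemma HistF_iff_VL (h : ℕ → ℕ × ℕ) (k : ℕ)
    (hl : ∀ t, 1 ≤ t → t ≤ k → 1 ≤ (h t).2) :
    (∀ t, 1 ≤ t → t ≤ k → (V X t ω, L X t ω) = h t) ↔ HistF h k (fun t => X t ω) := by
  constructor
  · intro hVL
    -- first: runStart t = sp h t for t ≤ k
    have key : ∀ t, t ≤ k → runStart X ω t = sp h t := by
      intro t
      induction t with
      | zero => intro _; rfl
      | succ t ih =>
          intro htk
          have ht' : t ≤ k := Nat.le_of_succ_le htk
          have hrs := ih ht'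
          have hVLt := hVL (t+1) (by omega) htk
          have hL : L X (t+1) ω = (h (t+1)).2 := by rw [← hVLt]
          have hl1 : 1 ≤ (h (t+1)).2 := hl (t+1) (by omega) htk
          unfold L at hL
          simp only [Nat.add_sub_cancel] at hL
          rw [hrs] at hL
          have h1 : 1 ≤ sp h t := sp_pos h t
          have : runStart X ω (t+1) = sp h t + (h (t+1)).2 := by omega
          simpa [sp] using this
    intro t h1t htk
    have hVLt := hVL t h1t htk
    have hV : V X t ω = (h t).1 := by rw [← hVLt]
    have hL : L X t ω = (h t).2 := by rw [← hVLt]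
    have hrs1 : runStart X ω (t-1) = sp h (t-1) := key (t-1) (by omega)
    have hrst : runStart X ω t = sp h t := key t htk
    refine ⟨by unfold V at hV; rw [hrs1] at hV; exact hV, ?_, ?_⟩
    · -- no descent strictly inside
      intro u hu1 hu2
      by_contra hcon
      push_neg at hcon
      have hmem : u ∈ {s | runStart X ω (t-1) < s ∧ X s ω < X (s-1) ω} := ⟨by omega, hcon⟩
      have hinf : runStart X ω t = sInf {s | runStart X ω (t-1) < s ∧ X s ω < X (s-1) ω} := by
        obtain ⟨t', rfl⟩ : ∃ t', t = t' + 1 := ⟨t - 1, by omega⟩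
        simp only [Nat.add_sub_cancel]
        rfl
      have := Nat.sInf_le hmem
      rw [← hinf] at this
      omega
    · -- descent at sp h t
      have hne : runStart X ω t ≠ 0 := by
        rw [hrst]; have := sp_pos h t; omega
      have hinf : runStart X ω t = sInf {s | runStart X ω (t-1) < s ∧ X s ω < X (s-1) ω} := by
        obtain ⟨t', rfl⟩ : ∃ t', t = t' + 1 := ⟨t - 1, by omega⟩
        simp only [Nat.add_sub_cancel]
        rfl
      have hnonempty : {s | runStart X ω (t-1) < s ∧ X s ω < X (s-1) ω}.Nonempty := by
        by_contra hcon
        rw [Set.not_nonempty_iff_eq_empty] at hcon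
        rw [hinf, hcon] at hne
        simp at hne
      have := Nat.sInf_mem hnonempty
      rw [← hinf, hrst] at this
      exact this.2
  · intro H
    have key := runStart_eq_of_HistF X ω h k hl H
    intro t h1t htk
    obtain ⟨hv, hnd, hdesc⟩ := H t h1t htk
    have e1 : V X t ω = (h t).1 := by
      unfold V; rw [key (t-1) (by omega)]; exact hv
    have e2 : L X t ω = (h t).2 := by
      unfold L; rw [key t htk, key (t-1) (by omega)]
      obtain ⟨t', rfl⟩ : ∃ t', t = t' + 1 := ⟨t - 1, by omega⟩
      simp only [Nat.add_sub_cancel]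
      show sp h t' + (h (t'+1)).2 - sp h t' = _
      omega
    have hrw : h t = ((h t).1, (h t).2) := rfl
    rw [hrw, ← e1, ← e2]

end Events
/-- path function from initial value and continuation list -/
def fn (v : ℕ) (l : List ℕ) : ℕ → ℕ := fun t => (v :: l).getD (t - 1) 0

lemma fn_one (v : ℕ) (l : List ℕ) : fn v l 1 = v := rfl

section Bridge
variable {Ω : Type*} [MeasurableSpace Ω] (μ : MeasureTheory.Measure Ω)
  [MeasureTheory.IsProbabilityMeasure μ]

lemma measure_determined (m n : ℕ) (hn : 1 ≤ n) (X : ℕ → Ω → ℕ)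
    (hX : ∀ k, Measurable (X k))
    (hCyl : ∀ (v : ℕ) (l : List ℕ), l.length = n - 1 →
      μ {ω | ∀ t, 1 ≤ t → t ≤ n → X t ω = fn v l t} = ini m v * wt m v l)
    (Q : (ℕ → ℕ) → Prop)
    (hdet : ∀ f g : ℕ → ℕ, (∀ t, 1 ≤ t → t ≤ n → f t = g t) → Q f → Q g) :
    μ {ω | Q (fun t => X t ω)} =
      ∑' p : ℕ × List ℕ,
        if p.2.length = n - 1 ∧ Q (fn p.1 p.2) then ini m p.1 * wt m p.1 p.2 else 0 := by
  classical
  set θ : Ω → ℕ × List ℕ :=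
    fun ω => (X 1 ω, (List.range (n-1)).map fun i => X (i+2) ω) with hθ
  have hfn : ∀ ω t, 1 ≤ t → t ≤ n → fn (θ ω).1 (θ ω).2 t = X t ω := by
    intro ω t ht1 htn
    rcases Nat.lt_or_ge t 2 with ht2 | ht2
    · have : t = 1 := by omega
      subst this; rfl
    · show ((X 1 ω :: _).getD (t-1) 0) = X t ω
      have ht1' : t - 1 = (t - 2) + 1 := by omega
      rw [ht1']
      show ((List.range (n-1)).map fun i => X (i+2) ω).getD (t-2) 0 = X t ω
      rw [getD_map_range]
      have : t - 2 < n - 1 := by omega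
      rw [if_pos this]
      congr 1
      omega
  have hQiff : ∀ ω, Q (fun t => X t ω) ↔ Q (fn (θ ω).1 (θ ω).2) := by
    intro ω
    constructor
    · exact fun hq => hdet _ _ (fun t ht1 htn => (hfn ω t ht1 htn).symm) hq
    · exact fun hq => hdet _ _ (fun t ht1 htn => hfn ω t ht1 htn) hq
  set S : ℕ × List ℕ → Set Ω := fun p => {ω | θ ω = p ∧ Q (fn p.1 p.2)} with hS
  have hA : {ω | Q (fun t => X t ω)} = ⋃ p, S p := by
    ext ω
    simp only [Set.mem_setOf_eq, Set.mem_iUnion, hS]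
    constructor
    · intro hq
      exact ⟨θ ω, rfl, (hQiff ω).mp hq⟩
    · rintro ⟨p, hp, hq⟩
      subst hp
      exact (hQiff ω).mpr hq
  have hfib_meas : ∀ p : ℕ × List ℕ, MeasurableSet {ω | θ ω = p} := by
    intro p
    have : {ω | θ ω = p} = {ω | X 1 ω = p.1} ∩
        {ω | (List.range (n-1)).map (fun i => X (i+2) ω) = p.2} := by
      ext ω; simp [hθ, Prod.ext_iff]
    rw [this]
    apply MeasurableSet.inter
    · exact hX 1 (measurableSet_singleton p.1)
    · by_cases hlen : p.2.length = n - 1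
      · have : {ω | (List.range (n-1)).map (fun i => X (i+2) ω) = p.2} =
            ⋂ i ∈ Finset.range (n-1), {ω | X (i+2) ω = p.2.getD i 0} := by
          ext ω
          simp only [Set.mem_setOf_eq, Set.mem_iInter, Finset.mem_range]
          constructor
          · intro he i hi
            rw [← he, getD_map_range, if_pos hi]
          · intro he
            apply List.ext_getElem (by simp [hlen])
            intro i h1 h2
            have hi : i < n - 1 := by simpa using h1
            rw [List.getElem_map, List.getElem_range]
            rw [he i hi, List.getD_eq_getElem _ _ h2]
        rw [this]
        exact MeasurableSet.biInter (Finset.range (n-1)).countable_toSet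
          (fun i _ => hX (i+2) (measurableSet_singleton _))
      · have : {ω | (List.range (n-1)).map (fun i => X (i+2) ω) = p.2} = ∅ := by
          ext ω
          simp only [Set.mem_setOf_eq, Set.mem_empty_iff_false, iff_false]
          intro he
          apply hlen
          rw [← he]
          simp
        rw [this]
        exact MeasurableSet.empty
  have hmeas : ∀ p, MeasurableSet (S p) := by
    intro p
    have : S p = {ω | θ ω = p} ∩ {ω | Q (fn p.1 p.2)} := rfl
    rw [this]
    apply (hfib_meas p).inter
    by_cases hq : Q (fn p.1 p.2)
    · simpa [hq] using MeasurableSet.univ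
    · simpa [hq] using MeasurableSet.empty
  have hdisj : Pairwise (Function.onFun Disjoint S) := by
    intro p q hpq
    apply Set.disjoint_left.mpr
    intro ω hp hq
    exact hpq (hp.1.symm.trans hq.1)
  rw [hA, MeasureTheory.measure_iUnion hdisj hmeas]
  apply tsum_congr
  intro p
  by_cases hq : Q (fn p.1 p.2)
  · have hSp : S p = {ω | θ ω = p} := by
      ext ω; simp [hS, hq]
    rw [hSp]
    by_cases hlen : p.2.length = n - 1
    · rw [if_pos ⟨hlen, hq⟩]
      -- fiber is exactly the cylinder of hLaw
      have hfib : {ω | θ ω = p} = {ω | ∀ t, 1 ≤ t → t ≤ n → X t ω = fn p.1 p.2 t} := by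
        ext ω
        simp only [Set.mem_setOf_eq, hθ, Prod.ext_iff]
        constructor
        · rintro ⟨h1, h2⟩ t ht1 htn
          have : θ ω = p := by simp [hθ, Prod.ext_iff, h1, h2]
          rw [← hfn ω t ht1 htn, this]
        · intro hAll
          constructor
          · rw [hAll 1 le_rfl hn]; rfl
          · apply List.ext_getElem (by simp [hlen])
            intro i h1 h2
            rw [List.getElem_map, List.getElem_range]
            have hi : i < n - 1 := by simpa using h1
            rw [hAll (i+2) (by omega) (by omega)]
            show (p.1 :: p.2).getD (i+2-1) 0 = p.2[i]
            have : i + 2 - 1 = i + 1 := by omega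
            rw [this]
            show p.2.getD i 0 = p.2[i]
            rw [List.getD_eq_getElem _ _ h2]
        
      rw [hfib]
      exact hCyl p.1 p.2 hlen
    · rw [if_neg (by tauto)]
      have : {ω | θ ω = p} = ∅ := by
        ext ω
        simp only [Set.mem_setOf_eq, Set.mem_empty_iff_false, iff_false]
        intro he
        apply hlen
        rw [← he]
        simp [hθ]
      rw [this]
      simp
  · rw [if_neg (by tauto)]
    have : S p = ∅ := by
      ext ω; simp [hS, hq]
    rw [this]
    simp

end Bridge

section Split

def splitEquiv (a b : ℕ) : {l : List ℕ // l.length = a + b} ≃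
    {l : List ℕ // l.length = a} × {l : List ℕ // l.length = b} where
  toFun l := (⟨l.1.take a, by rw [List.length_take, l.2]; omega⟩,
              ⟨l.1.drop a, by rw [List.length_drop, l.2]; omega⟩)
  invFun p := ⟨p.1.1 ++ p.2.1, by rw [List.length_append, p.1.2, p.2.2]⟩
  left_inv l := Subtype.ext (List.take_append_drop a l.1)
  right_inv p := by
    obtain ⟨⟨l₁, h₁⟩, ⟨l₂, h₂⟩⟩ := p
    have ht : (l₁ ++ l₂).take a = l₁ := by
      subst h₁; exact List.take_left
    have hd : (l₁ ++ l₂).drop a = l₂ := by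
      subst h₁; exact List.drop_left
    simp only [Prod.mk.injEq, Subtype.mk.injEq]
    exact ⟨ht, hd⟩

lemma tsum_ite_length (c : ℕ) (G : List ℕ → ℝ≥0∞) :
    (∑' l : List ℕ, if l.length = c then G l else 0)
    = ∑' (x : {l : List ℕ // l.length = c}), G x.1 := by
  have hsupp : Function.support (fun l : List ℕ => if l.length = c then G l else 0)
      ⊆ {l : List ℕ | l.length = c} := by
    intro l hl
    by_contra hc
    exact (Function.mem_support.mp hl) (if_neg hc)
  rw [← tsum_subtype_eq_of_support_subset hsupp]
  exact tsum_congr (fun x => if_pos x.2)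

lemma tsum_length_split (a b : ℕ) (F : List ℕ → ℝ≥0∞) :
    (∑' l : List ℕ, if l.length = a + b then F l else 0)
    = ∑' (l₁ : List ℕ) (l₂ : List ℕ),
        if l₁.length = a ∧ l₂.length = b then F (l₁ ++ l₂) else 0 := by
  rw [tsum_ite_length (a+b) F]
  rw [← Equiv.tsum_eq (splitEquiv a b).symm (fun x => F x.1)]
  have h3 : (∑' (p : {l : List ℕ // l.length = a} × {l : List ℕ // l.length = b}),
      F ((splitEquiv a b).symm p).1)
      = ∑' (x : {l : List ℕ // l.length = a}) (y : {l : List ℕ // l.length = b}),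
          F (x.1 ++ y.1) :=
    ENNReal.tsum_prod (f := fun (x : {l : List ℕ // l.length = a}) (y : {l : List ℕ // l.length = b}) => F (x.1 ++ y.1))
  rw [h3]
  have h4 : ∀ (x : {l : List ℕ // l.length = a}),
      (∑' (y : {l : List ℕ // l.length = b}), F (x.1 ++ y.1))
      = ∑' (l₂ : List ℕ), if l₂.length = b then F (x.1 ++ l₂) else 0 := by
    intro x
    rw [tsum_ite_length b (fun l₂ => F (x.1 ++ l₂))]
  calc (∑' (x : {l : List ℕ // l.length = a}) (y : {l : List ℕ // l.length = b}),
          F (x.1 ++ y.1))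
      = ∑' (x : {l : List ℕ // l.length = a}) (l₂ : List ℕ),
          if l₂.length = b then F (x.1 ++ l₂) else 0 := tsum_congr h4
    _ = ∑' (l₁ : List ℕ), if l₁.length = a then
          (∑' (l₂ : List ℕ), if l₂.length = b then F (l₁ ++ l₂) else 0) else 0 := by
        rw [tsum_ite_length a
          (fun l₁ => ∑' (l₂ : List ℕ), if l₂.length = b then F (l₁ ++ l₂) else 0)]
    _ = ∑' (l₁ : List ℕ) (l₂ : List ℕ),
          if l₁.length = a ∧ l₂.length = b then F (l₁ ++ l₂) else 0 := by
        apply tsum_congr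
        intro l₁
        by_cases hl₁ : l₁.length = a
        · rw [if_pos hl₁]
          apply tsum_congr
          intro l₂
          by_cases hl₂ : l₂.length = b
          · rw [if_pos hl₂, if_pos ⟨hl₁, hl₂⟩]
          · rw [if_neg hl₂, if_neg (by tauto)]
        · rw [if_neg hl₁]
          symm
          calc (∑' (l₂ : List ℕ), if l₁.length = a ∧ l₂.length = b then F (l₁ ++ l₂) else 0)
              = ∑' (_ : List ℕ), (0 : ℝ≥0∞) := by
                apply tsum_congr; intro l₂; exact if_neg (by tauto)
            _ = 0 := by simp

end Split

section Blocks

/-- chain value within a block: `cB i l r` is the r-th value of the chain `i :: l` -/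
def cB (i : ℕ) (l : List ℕ) (r : ℕ) : ℕ := (i :: l).getD r 0

lemma cB_zero (i : ℕ) (l : List ℕ) : cB i l 0 = i := rfl

lemma cB_eq_getD (i : ℕ) (l : List ℕ) (r : ℕ) (hr : 1 ≤ r) : cB i l r = l.getD (r-1) 0 := by
  obtain ⟨r', rfl⟩ : ∃ r', r = r' + 1 := ⟨r - 1, by omega⟩
  rfl

/-- a block: list of length ℓ, ascending (no descent) inside, descending at the end -/
def Blk (i ℓ : ℕ) (l : List ℕ) : Prop :=
  l.length = ℓ ∧ (∀ r, r + 1 < ℓ → cB i l r ≤ cB i l (r+1)) ∧ cB i l ℓ < cB i l (ℓ - 1)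

lemma prod_w_eq_wt (m v : ℕ) (l : List ℕ) :
    (∏ i ∈ Finset.range l.length, w m (fn v l (i+1)) (fn v l (i+2))) = wt m v l := by
  have h := wt_eq_prod m l.length (fun r => fn v l (r+1))
  have hmap : ((List.range l.length).map fun i => fn v l (i+1+1)) = l := by
    have he : (fun i => fn v l (i+1+1)) = (fun i => l.getD i 0) := by
      funext i; rfl
    rw [he]
    exact map_getD_range l
  rw [hmap] at h
  rw [fn_one] at h
  exact h.symm

lemma fn_append_low (v : ℕ) (l₁ l₂ : List ℕ) (t : ℕ) (ht : t ≤ l₁.length + 1) :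
    fn v (l₁ ++ l₂) t = fn v l₁ t := by
  show ((v :: l₁) ++ l₂).getD (t-1) 0 = (v :: l₁).getD (t-1) 0
  apply List.getD_append
  simp only [List.length_cons]
  omega

lemma fn_append_high (v : ℕ) (l₁ l₂ : List ℕ) (r : ℕ) (hr : 1 ≤ r) :
    fn v (l₁ ++ l₂) (l₁.length + 1 + r) = l₂.getD (r - 1) 0 := by
  show ((v :: l₁) ++ l₂).getD (l₁.length + 1 + r - 1) 0 = _
  rw [List.getD_append_right]
  · congr 1
    simp only [List.length_cons]
    omega
  · simp only [List.length_cons]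
    omega

lemma HistF_split (h : ℕ → ℕ × ℕ) (k' v j : ℕ) (l₁ l₂ : List ℕ)
    (hb : 1 ≤ (h (k'+1)).2)
    (h1 : l₁.length = sp h k' - 1) (h2 : l₂.length = (h (k'+1)).2) :
    (HistF h (k'+1) (fn v (l₁ ++ l₂)) ∧ fn v (l₁ ++ l₂) (sp h (k'+1)) = j) ↔
    ((HistF h k' (fn v l₁) ∧ fn v l₁ (sp h k') = (h (k'+1)).1) ∧
     (Blk (h (k'+1)).1 (h (k'+1)).2 l₂ ∧ cB (h (k'+1)).1 l₂ (h (k'+1)).2 = j)) := by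
  set i := (h (k'+1)).1 with hi
  set b := (h (k'+1)).2 with hbdef
  have hsppos := sp_pos h k'
  have hsp : sp h k' = l₁.length + 1 := by omega
  have hsp1 : sp h (k'+1) = sp h k' + b := rfl
  have hlow : ∀ t, t ≤ sp h k' → fn v (l₁ ++ l₂) t = fn v l₁ t := by
    intro t ht
    exact fn_append_low v l₁ l₂ t (by omega)
  have hhigh : ∀ r, 1 ≤ r → fn v (l₁ ++ l₂) (sp h k' + r) = cB i l₂ r := by
    intro r hr
    rw [hsp, fn_append_high v l₁ l₂ r hr, cB_eq_getD i l₂ r hr]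
  constructor
  · rintro ⟨H, hpin⟩
    obtain ⟨hstart, hnd, hdesc⟩ := H (k'+1) (by omega) le_rfl
    simp only [Nat.add_sub_cancel] at hstart
    have hstart' : fn v (l₁ ++ l₂) (sp h k') = i := hstart
    have hfull : ∀ r, fn v (l₁ ++ l₂) (sp h k' + r) = cB i l₂ r := by
      intro r
      rcases Nat.eq_zero_or_pos r with hr | hr
      · subst hr; simpa [cB_zero] using hstart'
      · exact hhigh r hr
    refine ⟨⟨?_, ?_⟩, ⟨?_, ?_⟩⟩
    · -- HistF h k' (fn v l₁)
      intro t ht1 htk'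
      obtain ⟨c1, c2, c3⟩ := H t ht1 (by omega)
      have hm1 : sp h (t-1) ≤ sp h k' := sp_mono h (by omega)
      have hmt : sp h t ≤ sp h k' := sp_mono h htk'
      refine ⟨by rw [← hlow _ hm1]; exact c1, ?_, ?_⟩
      · intro u hu1 hu2
        have := c2 u hu1 hu2
        rw [hlow u (by omega), hlow (u-1) (by omega)] at this
        exact this
      · rw [← hlow _ hmt, ← hlow _ (by omega)]
        exact c3
    · -- pin at junction
      rw [← hlow _ le_rfl]; exact hstart'
    · -- Blk
      refine ⟨h2, ?_, ?_⟩
      · intro r hr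
        obtain ⟨hstart2, hnd2, hdesc2⟩ := H (k'+1) (by omega) le_rfl
        have := hnd2 (sp h k' + (r+1)) (by simp only [Nat.add_sub_cancel]; omega)
          (by rw [hsp1]; omega)
        have e1 : sp h k' + (r+1) - 1 = sp h k' + r := by omega
        rw [e1, hfull r, hfull (r+1)] at this
        exact this
      · have := hdesc
        rw [hsp1] at this
        have e1 : sp h k' + b - 1 = sp h k' + (b - 1) := by omega
        rw [e1, hfull b, hfull (b-1)] at this
        exact this
    · -- pin j
      rw [hsp1, hfull b] at hpin
      exact hpin
  · rintro ⟨⟨H1, hpin1⟩, ⟨⟨hlen2, hnd2, hdesc2⟩, hpinj⟩⟩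
    have hstart' : fn v (l₁ ++ l₂) (sp h k') = i := by
      rw [hlow _ le_rfl]; exact hpin1
    have hfull : ∀ r, fn v (l₁ ++ l₂) (sp h k' + r) = cB i l₂ r := by
      intro r
      rcases Nat.eq_zero_or_pos r with hr | hr
      · subst hr; simpa [cB_zero] using hstart'
      · exact hhigh r hr
    constructor
    · intro t ht1 htk
      rcases Nat.lt_or_ge t (k'+1) with hlt | hge
      · obtain ⟨c1, c2, c3⟩ := H1 t ht1 (by omega)
        have hm1 : sp h (t-1) ≤ sp h k' := sp_mono h (by omega)
        have hmt : sp h t ≤ sp h k' := sp_mono h (by omega)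
        refine ⟨by rw [hlow _ hm1]; exact c1, ?_, ?_⟩
        · intro u hu1 hu2
          have := c2 u hu1 hu2
          rw [← hlow u (by omega), ← hlow (u-1) (by omega)] at this
          exact this
        · rw [hlow _ hmt, hlow _ (by omega)]
          exact c3
      · have ht : t = k' + 1 := by omega
        subst ht
        refine ⟨by simp only [Nat.add_sub_cancel]; exact hstart', ?_, ?_⟩
        · intro u hu1 hu2
          simp only [Nat.add_sub_cancel] at hu1
          rw [hsp1] at hu2
          set r := u - sp h k' with hrdef
          have hr1 : 1 ≤ r := by omega
          have hrb : r < b := by omega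
          have e1 : u = sp h k' + r := by omega
          have e2 : u - 1 = sp h k' + (r - 1) := by omega
          rw [e2, e1, hfull r, hfull (r-1)]
          have := hnd2 (r-1) (by omega)
          have e3 : r - 1 + 1 = r := by omega
          rw [e3] at this
          exact this
        · rw [hsp1]
          have e1 : sp h k' + b - 1 = sp h k' + (b - 1) := by omega
          rw [e1, hfull b, hfull (b-1)]
          exact hdesc2
    · rw [hsp1, hfull b]
      exact hpinj

end Blocks

section Sums

noncomputable def G (m i ℓ j : ℕ) : ℝ≥0∞ :=
  ∑' l : List ℕ, if Blk i ℓ l ∧ cB i l ℓ = j then wt m i l else 0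

noncomputable def G2 (m i ℓ : ℕ) : ℝ≥0∞ :=
  ∑' l : List ℕ, if Blk i ℓ l then wt m i l else 0

noncomputable def TS (m : ℕ) (h : ℕ → ℕ × ℕ) (k j : ℕ) : ℝ≥0∞ :=
  ∑' p : ℕ × List ℕ,
    if p.2.length = sp h k - 1 ∧ (HistF h k (fn p.1 p.2) ∧ fn p.1 p.2 (sp h k) = j)
    then ini m p.1 * wt m p.1 p.2 else 0

noncomputable def SS (m : ℕ) (h : ℕ → ℕ × ℕ) (k : ℕ) : ℝ≥0∞ :=
  ∑' p : ℕ × List ℕ,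
    if p.2.length = sp h k - 1 ∧ HistF h k (fn p.1 p.2)
    then ini m p.1 * wt m p.1 p.2 else 0

lemma HistF_zero (h : ℕ → ℕ × ℕ) (f : ℕ → ℕ) : HistF h 0 f := by
  intro t ht1 ht0
  omega

lemma TS_zero (m : ℕ) (h : ℕ → ℕ × ℕ) (j : ℕ) : TS m h 0 j = ini m j := by
  have hinner : ∀ v : ℕ,
      (∑' l : List ℕ, if l.length = sp h 0 - 1 ∧ (HistF h 0 (fn v l) ∧ fn v l (sp h 0) = j)
        then ini m v * wt m v l else 0) = if v = j then ini m v else 0 := by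
    intro v
    rw [tsum_eq_single ([] : List ℕ)]
    · show (if ([] : List ℕ).length = sp h 0 - 1 ∧ _ then ini m v * wt m v [] else 0) = _
      have hsp0 : sp h 0 = 1 := rfl
      by_cases hv : v = j
      · rw [if_pos ⟨by simp [hsp0], HistF_zero h _, by rw [hsp0, fn_one]; exact hv⟩, if_pos hv]
        show ini m v * 1 = ini m v
        rw [mul_one]
      · rw [if_neg, if_neg hv]
        rintro ⟨-, -, hpin⟩
        rw [show sp h 0 = 1 from rfl, fn_one] at hpin
        exact hv hpin
    · intro l hl
      apply if_neg
      rintro ⟨hlen, -⟩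
      apply hl
      have : l.length = 0 := by rw [hlen]; rfl
      exact List.length_eq_zero_iff.mp this
  calc TS m h 0 j
      = ∑' (v : ℕ), ∑' l : List ℕ,
          (if l.length = sp h 0 - 1 ∧ (HistF h 0 (fn v l) ∧ fn v l (sp h 0) = j)
          then ini m v * wt m v l else 0) :=
        ENNReal.tsum_prod (f := fun v l =>
          if l.length = sp h 0 - 1 ∧ (HistF h 0 (fn v l) ∧ fn v l (sp h 0) = j)
          then ini m v * wt m v l else 0)
    _ = ∑' (v : ℕ), if v = j then ini m v else 0 := tsum_congr hinner
    _ = ini m j := by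
        rw [tsum_eq_single j]
        · rw [if_pos rfl]
        · intro v hv; exact if_neg hv

lemma TS_succ (m : ℕ) (h : ℕ → ℕ × ℕ) (k' j : ℕ) (hb : 1 ≤ (h (k'+1)).2) :
    TS m h (k'+1) j = TS m h k' (h (k'+1)).1 * G m (h (k'+1)).1 (h (k'+1)).2 j := by
  set i := (h (k'+1)).1 with hi
  set b := (h (k'+1)).2 with hbdef
  have hsppos := sp_pos h k'
  have hlen : sp h (k'+1) - 1 = (sp h k' - 1) + b := by
    show sp h k' + b - 1 = _
    omega
  have hstep : ∀ v : ℕ,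
      (∑' l : List ℕ, if l.length = sp h (k'+1) - 1 ∧
          (HistF h (k'+1) (fn v l) ∧ fn v l (sp h (k'+1)) = j)
        then ini m v * wt m v l else 0)
      = (∑' l₁ : List ℕ, if l₁.length = sp h k' - 1 ∧
            (HistF h k' (fn v l₁) ∧ fn v l₁ (sp h k') = i)
          then ini m v * wt m v l₁ else 0) * G m i b j := by
    intro v
    have e1 : (∑' l : List ℕ, if l.length = sp h (k'+1) - 1 ∧
          (HistF h (k'+1) (fn v l) ∧ fn v l (sp h (k'+1)) = j)
        then ini m v * wt m v l else 0)
        = ∑' l : List ℕ, if l.length = (sp h k' - 1) + b then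
            (if HistF h (k'+1) (fn v l) ∧ fn v l (sp h (k'+1)) = j
              then ini m v * wt m v l else 0) else 0 := by
      apply tsum_congr
      intro l
      rw [← hlen]
      by_cases hc1 : l.length = sp h (k'+1) - 1
      · by_cases hc2 : HistF h (k'+1) (fn v l) ∧ fn v l (sp h (k'+1)) = j
        · rw [if_pos ⟨hc1, hc2⟩, if_pos hc1, if_pos hc2]
        · rw [if_neg (by tauto), if_pos hc1, if_neg hc2]
      · rw [if_neg (by tauto), if_neg hc1]
    rw [e1, tsum_length_split]
    have e2 : ∀ (l₁ l₂ : List ℕ),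
        (if l₁.length = sp h k' - 1 ∧ l₂.length = b then
          (if HistF h (k'+1) (fn v (l₁ ++ l₂)) ∧ fn v (l₁ ++ l₂) (sp h (k'+1)) = j
            then ini m v * wt m v (l₁ ++ l₂) else 0) else 0)
        = (if l₁.length = sp h k' - 1 ∧ (HistF h k' (fn v l₁) ∧ fn v l₁ (sp h k') = i)
            then ini m v * wt m v l₁ else 0)
          * (if Blk i b l₂ ∧ cB i l₂ b = j then wt m i l₂ else 0) := by
      intro l₁ l₂
      by_cases hc1 : l₁.length = sp h k' - 1 ∧ l₂.length = b
      · rw [if_pos hc1]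
        have hiff := HistF_split h k' v j l₁ l₂ hb hc1.1 hc1.2
        by_cases hc2 : HistF h k' (fn v l₁) ∧ fn v l₁ (sp h k') = i
        · by_cases hc3 : Blk i b l₂ ∧ cB i l₂ b = j
          · rw [if_pos (hiff.mpr ⟨hc2, hc3⟩), if_pos ⟨hc1.1, hc2⟩, if_pos hc3]
            -- wt multiplicativity at the junction
            have hjunc : l₁.getLastD v = i := by
              have := hc2.2
              rw [show fn v l₁ (sp h k') = (v :: l₁).getD (sp h k' - 1) 0 from rfl] at this
              rw [show sp h k' - 1 = l₁.length from by omega] at this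
              rw [getD_cons_length] at this
              exact this
            rw [wt_append, hjunc, mul_assoc]
          · rw [if_neg (fun hcl => hc3 (hiff.mp hcl).2), if_neg hc3, mul_zero]
        · rw [if_neg (fun hcl => hc2 (hiff.mp hcl).1),
            if_neg (fun hx => hc2 hx.2), zero_mul]
      · rw [if_neg hc1]
        rcases (not_and_or.mp hc1) with hc | hc
        · rw [if_neg (by tauto), zero_mul]
        · -- l₂ has wrong length, so Blk fails
          have : ¬ (Blk i b l₂ ∧ cB i l₂ b = j) := by
            rintro ⟨⟨hbl, -⟩, -⟩
            exact hc hbl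
          rw [if_neg this, mul_zero]
    calc (∑' (l₁ : List ℕ) (l₂ : List ℕ),
          if l₁.length = sp h k' - 1 ∧ l₂.length = b then
            (if HistF h (k'+1) (fn v (l₁ ++ l₂)) ∧ fn v (l₁ ++ l₂) (sp h (k'+1)) = j
              then ini m v * wt m v (l₁ ++ l₂) else 0) else 0)
        = ∑' (l₁ : List ℕ) (l₂ : List ℕ),
            (if l₁.length = sp h k' - 1 ∧ (HistF h k' (fn v l₁) ∧ fn v l₁ (sp h k') = i)
              then ini m v * wt m v l₁ else 0)
            * (if Blk i b l₂ ∧ cB i l₂ b = j then wt m i l₂ else 0) := by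
          apply tsum_congr; intro l₁; apply tsum_congr; intro l₂; exact e2 l₁ l₂
      _ = ∑' (l₁ : List ℕ),
            (if l₁.length = sp h k' - 1 ∧ (HistF h k' (fn v l₁) ∧ fn v l₁ (sp h k') = i)
              then ini m v * wt m v l₁ else 0) * G m i b j := by
          apply tsum_congr; intro l₁
          rw [ENNReal.tsum_mul_left]
          rfl
      _ = _ := ENNReal.tsum_mul_right
  calc TS m h (k'+1) j
      = ∑' (v : ℕ), ∑' l : List ℕ,
          (if l.length = sp h (k'+1) - 1 ∧
            (HistF h (k'+1) (fn v l) ∧ fn v l (sp h (k'+1)) = j)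
          then ini m v * wt m v l else 0) :=
        ENNReal.tsum_prod (f := fun v l =>
          if l.length = sp h (k'+1) - 1 ∧
            (HistF h (k'+1) (fn v l) ∧ fn v l (sp h (k'+1)) = j)
          then ini m v * wt m v l else 0)
    _ = ∑' (v : ℕ), (∑' l₁ : List ℕ, if l₁.length = sp h k' - 1 ∧
            (HistF h k' (fn v l₁) ∧ fn v l₁ (sp h k') = i)
          then ini m v * wt m v l₁ else 0) * G m i b j := tsum_congr hstep
    _ = (∑' (v : ℕ), ∑' l₁ : List ℕ, if l₁.length = sp h k' - 1 ∧
            (HistF h k' (fn v l₁) ∧ fn v l₁ (sp h k') = i)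
          then ini m v * wt m v l₁ else 0) * G m i b j := ENNReal.tsum_mul_right
    _ = TS m h k' i * G m i b j := by
        rw [TS]
        exact congrArg (· * G m i b j) (ENNReal.tsum_prod (f := fun v l₁ =>
          if l₁.length = sp h k' - 1 ∧ (HistF h k' (fn v l₁) ∧ fn v l₁ (sp h k') = i)
          then ini m v * wt m v l₁ else 0)).symm

lemma SS_eq_tsum_TS (m : ℕ) (h : ℕ → ℕ × ℕ) (k : ℕ) : SS m h k = ∑' j, TS m h k j := by
  rw [SS]
  have hpt : ∀ p : ℕ × List ℕ,
      (if p.2.length = sp h k - 1 ∧ HistF h k (fn p.1 p.2)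
        then ini m p.1 * wt m p.1 p.2 else 0)
      = ∑' j : ℕ, if p.2.length = sp h k - 1 ∧ (HistF h k (fn p.1 p.2) ∧ fn p.1 p.2 (sp h k) = j)
        then ini m p.1 * wt m p.1 p.2 else 0 := by
    intro p
    by_cases hc : p.2.length = sp h k - 1 ∧ HistF h k (fn p.1 p.2)
    · rw [if_pos hc, tsum_eq_single (fn p.1 p.2 (sp h k))]
      · rw [if_pos ⟨hc.1, hc.2, rfl⟩]
      · intro j hj
        apply if_neg
        rintro ⟨-, -, hpin⟩
        exact hj hpin.symm
    · rw [if_neg hc]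
      symm
      have hz : ∀ j : ℕ, (if p.2.length = sp h k - 1 ∧
            (HistF h k (fn p.1 p.2) ∧ fn p.1 p.2 (sp h k) = j)
          then ini m p.1 * wt m p.1 p.2 else 0) = 0 := by
        intro j
        apply if_neg
        rintro ⟨a, b2, -⟩
        exact hc ⟨a, b2⟩
      simp only [hz, tsum_zero]
  calc (∑' p : ℕ × List ℕ, if p.2.length = sp h k - 1 ∧ HistF h k (fn p.1 p.2)
        then ini m p.1 * wt m p.1 p.2 else 0)
      = ∑' (p : ℕ × List ℕ) (j : ℕ),
          if p.2.length = sp h k - 1 ∧ (HistF h k (fn p.1 p.2) ∧ fn p.1 p.2 (sp h k) = j)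
          then ini m p.1 * wt m p.1 p.2 else 0 := tsum_congr hpt
    _ = ∑' (j : ℕ) (p : ℕ × List ℕ),
          if p.2.length = sp h k - 1 ∧ (HistF h k (fn p.1 p.2) ∧ fn p.1 p.2 (sp h k) = j)
          then ini m p.1 * wt m p.1 p.2 else 0 := ENNReal.tsum_comm
    _ = ∑' j, TS m h k j := rfl

lemma G2_eq_tsum_G (m i ℓ : ℕ) : G2 m i ℓ = ∑' j, G m i ℓ j := by
  rw [G2]
  have hpt : ∀ l : List ℕ,
      (if Blk i ℓ l then wt m i l else 0)
      = ∑' j : ℕ, if Blk i ℓ l ∧ cB i l ℓ = j then wt m i l else 0 := by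
    intro l
    by_cases hc : Blk i ℓ l
    · rw [if_pos hc, tsum_eq_single (cB i l ℓ)]
      · rw [if_pos ⟨hc, rfl⟩]
      · intro j hj
        apply if_neg
        rintro ⟨-, hpin⟩
        exact hj hpin.symm
    · rw [if_neg hc]
      symm
      have hz : ∀ j : ℕ, (if Blk i ℓ l ∧ cB i l ℓ = j then wt m i l else 0) = 0 := by
        intro j
        apply if_neg
        rintro ⟨a, -⟩
        exact hc a
      simp only [hz, tsum_zero]
  calc (∑' l : List ℕ, if Blk i ℓ l then wt m i l else 0)
      = ∑' (l : List ℕ) (j : ℕ), if Blk i ℓ l ∧ cB i l ℓ = j then wt m i l else 0 :=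
        tsum_congr hpt
    _ = ∑' (j : ℕ) (l : List ℕ), if Blk i ℓ l ∧ cB i l ℓ = j then wt m i l else 0 :=
        ENNReal.tsum_comm
    _ = ∑' j, G m i ℓ j := rfl

lemma SS_succ (m : ℕ) (h : ℕ → ℕ × ℕ) (k' : ℕ) (hb : 1 ≤ (h (k'+1)).2) :
    SS m h (k'+1) = TS m h k' (h (k'+1)).1 * G2 m (h (k'+1)).1 (h (k'+1)).2 := by
  rw [SS_eq_tsum_TS, G2_eq_tsum_G, ← ENNReal.tsum_mul_left]
  apply tsum_congr
  intro j
  exact TS_succ m h k' j hb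

lemma sp_congr (h₁ h₂ : ℕ → ℕ × ℕ) (k : ℕ) (hagree : ∀ t, 1 ≤ t → t ≤ k → h₁ t = h₂ t) :
    sp h₁ k = sp h₂ k := by
  induction k with
  | zero => rfl
  | succ k ih =>
      show sp h₁ k + (h₁ (k+1)).2 = sp h₂ k + (h₂ (k+1)).2
      rw [ih (fun t ht1 ht2 => hagree t ht1 (by omega)), hagree (k+1) (by omega) le_rfl]

lemma HistF_congr_h (h₁ h₂ : ℕ → ℕ × ℕ) (k : ℕ) (f : ℕ → ℕ)
    (hagree : ∀ t, 1 ≤ t → t ≤ k → h₁ t = h₂ t) :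
    HistF h₁ k f ↔ HistF h₂ k f := by
  have hsp : ∀ t, t ≤ k → sp h₁ t = sp h₂ t := by
    intro t ht
    exact sp_congr h₁ h₂ t (fun u hu1 hu2 => hagree u hu1 (by omega))
  constructor <;> intro H t ht1 htk <;> obtain ⟨c1, c2, c3⟩ := H t ht1 htk
  · rw [← hsp (t-1) (by omega), ← hsp t htk, ← hagree t ht1 htk]
    exact ⟨c1, c2, c3⟩
  · rw [hsp (t-1) (by omega), hsp t htk, hagree t ht1 htk]
    exact ⟨c1, c2, c3⟩

lemma TS_congr (m : ℕ) (h₁ h₂ : ℕ → ℕ × ℕ) (k j : ℕ)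
    (hagree : ∀ t, 1 ≤ t → t ≤ k → h₁ t = h₂ t) :
    TS m h₁ k j = TS m h₂ k j := by
  have hsp : sp h₁ k = sp h₂ k := sp_congr h₁ h₂ k hagree
  rw [TS, TS]
  apply tsum_congr
  intro p
  rw [hsp]
  by_cases hH : HistF h₁ k (fn p.1 p.2)
  · rw [show HistF h₁ k (fn p.1 p.2) = HistF h₂ k (fn p.1 p.2) from
      propext (HistF_congr_h h₁ h₂ k _ hagree)]
  · rw [show HistF h₁ k (fn p.1 p.2) = HistF h₂ k (fn p.1 p.2) from
      propext (HistF_congr_h h₁ h₂ k _ hagree)]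

end Sums

section Det

lemma sp_ge_two (h : ℕ → ℕ × ℕ) (k : ℕ) (hl : ∀ t, 1 ≤ t → t ≤ k → 1 ≤ (h t).2)
    (t : ℕ) (ht1 : 1 ≤ t) (htk : t ≤ k) : 2 ≤ sp h t := by
  obtain ⟨t', rfl⟩ : ∃ t', t = t' + 1 := ⟨t - 1, by omega⟩
  have h1 := sp_pos h t'
  have h2 := hl (t'+1) ht1 htk
  show 2 ≤ sp h t' + (h (t'+1)).2
  omega

lemma HistF_det (h : ℕ → ℕ × ℕ) (k : ℕ) (hl : ∀ t, 1 ≤ t → t ≤ k → 1 ≤ (h t).2)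
    (f g : ℕ → ℕ) (hfg : ∀ t, 1 ≤ t → t ≤ sp h k → f t = g t) :
    HistF h k f → HistF h k g := by
  intro H t ht1 htk
  obtain ⟨c1, c2, c3⟩ := H t ht1 htk
  have hm1 : sp h (t-1) ≤ sp h k := sp_mono h (by omega)
  have hmt : sp h t ≤ sp h k := sp_mono h htk
  have hp1 : 1 ≤ sp h (t-1) := sp_pos h (t-1)
  have hpt : 2 ≤ sp h t := sp_ge_two h k hl t ht1 htk
  refine ⟨?_, ?_, ?_⟩
  · rw [← hfg _ hp1 hm1]; exact c1
  · intro u hu1 hu2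
    rw [← hfg u (by omega) (by omega), ← hfg (u-1) (by omega) (by omega)]
    exact c2 u hu1 hu2
  · rw [← hfg _ (by omega) hmt, ← hfg (sp h t - 1) (by omega) (by omega)]
    exact c3

lemma HistF_pin_det (h : ℕ → ℕ × ℕ) (k j : ℕ) (hl : ∀ t, 1 ≤ t → t ≤ k → 1 ≤ (h t).2)
    (f g : ℕ → ℕ) (hfg : ∀ t, 1 ≤ t → t ≤ sp h k → f t = g t) :
    (HistF h k f ∧ f (sp h k) = j) → (HistF h k g ∧ g (sp h k) = j) := by
  rintro ⟨H, hpin⟩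
  refine ⟨HistF_det h k hl f g hfg H, ?_⟩
  rw [← hfg _ (sp_pos h k) le_rfl]
  exact hpin

end Det

section MeasureWrap
variable {Ω : Type*} [MeasurableSpace Ω] (μ : MeasureTheory.Measure Ω)
  [MeasureTheory.IsProbabilityMeasure μ]

lemma measure_HistF (m : ℕ) (X : ℕ → Ω → ℕ) (hX : ∀ k, Measurable (X k))
    (hCyl : ∀ n, 1 ≤ n → ∀ (v : ℕ) (ls : List ℕ), ls.length = n - 1 →
      μ {ω | ∀ t, 1 ≤ t → t ≤ n → X t ω = fn v ls t} = ini m v * wt m v ls)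
    (h₀ : ℕ → ℕ × ℕ) (k₀ : ℕ) (hl : ∀ t, 1 ≤ t → t ≤ k₀ → 1 ≤ (h₀ t).2) :
    μ {ω | HistF h₀ k₀ (fun t => X t ω)} = SS m h₀ k₀ := by
  have := measure_determined μ m (sp h₀ k₀) (sp_pos _ _) X hX
    (hCyl _ (sp_pos _ _)) (HistF h₀ k₀) (HistF_det h₀ k₀ hl)
  rw [SS]
  exact this

lemma measure_HistF_pin (m : ℕ) (X : ℕ → Ω → ℕ) (hX : ∀ k, Measurable (X k))
    (hCyl : ∀ n, 1 ≤ n → ∀ (v : ℕ) (ls : List ℕ), ls.length = n - 1 →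
      μ {ω | ∀ t, 1 ≤ t → t ≤ n → X t ω = fn v ls t} = ini m v * wt m v ls)
    (h₀ : ℕ → ℕ × ℕ) (k₀ j₀ : ℕ) (hl : ∀ t, 1 ≤ t → t ≤ k₀ → 1 ≤ (h₀ t).2) :
    μ {ω | HistF h₀ k₀ (fun t => X t ω) ∧ X (sp h₀ k₀) ω = j₀} = TS m h₀ k₀ j₀ := by
  have := measure_determined μ m (sp h₀ k₀) (sp_pos _ _) X hX
    (hCyl _ (sp_pos _ _)) (fun f => HistF h₀ k₀ f ∧ f (sp h₀ k₀) = j₀)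
    (HistF_pin_det h₀ k₀ j₀ hl)
  rw [TS]
  exact this.trans (tsum_congr fun p => ite_congr rfl (fun _ => rfl) (fun _ => rfl))

end MeasureWrap

end RunsAux

open RunsAux

/-- The process Y = (V_k, L_k)_{k≥1} is a homogeneous Markov chain with
transition probabilities P((i,ℓ),(j,λ)) = Φ_ℓ(i,j)·φ_λ(j)/φ_ℓ(i): conditionally on any
history (Y_1, ..., Y_k) ending in state (i,ℓ), the probability that Y_{k+1} = (j,λ)
equals Φ_ℓ(i,j)·φ_λ(j)/φ_ℓ(i), where Φ_ℓ(i,j) = P(V_2 = j, L_1 = ℓ | V_1 = i) and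
φ_ℓ(i) = P(L_1 = ℓ | V_1 = i). -/
theorem Y_is_homogeneous_markov {Ω : Type*} [MeasurableSpace Ω] (μ : Measure Ω)
    [IsProbabilityMeasure μ] (m : ℕ) (hm : 2 ≤ m) (X : ℕ → Ω → ℕ)
    (hX : ∀ k, Measurable (X k))
    (hLaw : ∀ n, 1 ≤ n → ∀ f : ℕ → ℕ,
      μ {ω | ∀ k, 1 ≤ k → k ≤ n → X k ω = f k} =
        (if f 1 ∈ Finset.Icc 1 m then (1 : ℝ≥0∞) / m else 0) *
          ∏ k ∈ Finset.Icc 1 (n - 1),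
            (if f (k + 1) ∈ Finset.Icc 1 m ∧ f (k + 1) ≠ f k then (1 : ℝ≥0∞) / (m - 1) else 0))
    (E : Set (ℕ × ℕ))
    (hE : E = {p : ℕ × ℕ | 1 ≤ p.1 ∧ p.1 ≤ m - 1 ∧ 1 ≤ p.2 ∧ p.2 ≤ m - p.1 + 1}
      \ {(1, 1)})
    (k : ℕ) (hk : 1 ≤ k) (j lam : ℕ) (hjl : (j, lam) ∈ E)
    (h : ℕ → ℕ × ℕ) (hh1 : h 1 ∈ E ∪ {(m, 1)}) (hht : ∀ t, 2 ≤ t → t ≤ k → h t ∈ E)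
    (hpos : μ {ω | ∀ t, 1 ≤ t → t ≤ k → (V X t ω, L X t ω) = h t} ≠ 0) :
    condP μ {ω | V X (k + 1) ω = j ∧ L X (k + 1) ω = lam}
        {ω | ∀ t, 1 ≤ t → t ≤ k → (V X t ω, L X t ω) = h t} =
      condP μ {ω | V X 2 ω = j ∧ L X 1 ω = (h k).2} {ω | V X 1 ω = (h k).1}
        * condP μ {ω | L X 1 ω = lam} {ω | V X 1 ω = j}
        / condP μ {ω | L X 1 ω = (h k).2} {ω | V X 1 ω = (h k).1} := by
  
  obtain ⟨k', rfl⟩ : ∃ k', k = k' + 1 := ⟨k - 1, by omega⟩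
  have hjmem : 1 ≤ j ∧ j ≤ m - 1 ∧ 1 ≤ lam ∧ lam ≤ m - j + 1 := by
    rw [hE] at hjl
    exact hjl.1
  have hjIcc : j ∈ Finset.Icc 1 m := by
    rw [Finset.mem_Icc]
    omega
  have hl : ∀ t, 1 ≤ t → t ≤ k' + 1 → 1 ≤ (h t).2 := by
    intro t ht1 htk
    rcases Nat.lt_or_ge t 2 with h2 | h2
    · have ht : t = 1 := by omega
      subst ht
      rcases hh1 with hE1 | hm1
      · rw [hE] at hE1
        exact hE1.1.2.2.1
      · have : h 1 = (m, 1) := hm1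
        rw [this]
    · have := hht t h2 htk
      rw [hE] at this
      exact this.1.2.2.1
  have hiIcc : (h (k' + 1)).1 ∈ Finset.Icc 1 m := by
    rcases Nat.eq_zero_or_pos k' with rfl | hposk
    · simp only [Nat.zero_add]
      rcases hh1 with hE1 | hm1
      · rw [hE] at hE1
        obtain ⟨ha, hb, -, -⟩ := hE1.1
        rw [Finset.mem_Icc]
        omega
      · have : h 1 = (m, 1) := hm1
        rw [this, Finset.mem_Icc]
        exact ⟨by omega, le_rfl⟩
    · have := hht (k' + 1) (by omega) le_rfl
      rw [hE] at this
      obtain ⟨ha, hb, -, -⟩ := this.1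
      rw [Finset.mem_Icc]
      omega
  have hlk : 1 ≤ (h (k' + 1)).2 := hl (k' + 1) (by omega) le_rfl
  -- the cylinder law, in weight form
  have hCyl : ∀ n, 1 ≤ n → ∀ (v : ℕ) (ls : List ℕ), ls.length = n - 1 →
      μ {ω | ∀ t, 1 ≤ t → t ≤ n → X t ω = fn v ls t} = ini m v * wt m v ls := by
    intro n hn v ls hlen
    rw [hLaw n hn (fn v ls)]
    have hini : (if fn v ls 1 ∈ Finset.Icc 1 m then (1 : ℝ≥0∞) / m else 0) = ini m v := by
      rw [fn_one]
      by_cases hv : v ∈ Finset.Icc 1 m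
      · rw [if_pos hv, ini, if_pos hv]
      · rw [if_neg hv, ini, if_neg hv]
    rw [hini]
    congr 1
    have h1 : n - 1 = ls.length := hlen.symm
    rw [h1]
    calc (∏ t ∈ Finset.Icc 1 ls.length,
          if fn v ls (t + 1) ∈ Finset.Icc 1 m ∧ fn v ls (t + 1) ≠ fn v ls t
          then (1 : ℝ≥0∞) / (m - 1) else 0)
        = ∏ i ∈ Finset.range ls.length, w m (fn v ls (i + 1)) (fn v ls (i + 2)) := by
          rw [← Finset.Ico_add_one_right_eq_Icc, Finset.prod_Ico_eq_prod_range]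
          have e : ls.length + 1 - 1 = ls.length := by omega
          rw [e]
          apply Finset.prod_congr rfl
          intro t _
          have e1 : 1 + t = t + 1 := by omega
          rw [e1]
          by_cases hc : fn v ls (t + 1 + 1) ∈ Finset.Icc 1 m ∧ fn v ls (t + 1 + 1) ≠ fn v ls (t + 1)
          · rw [if_pos hc, w, if_pos hc]
          · rw [if_neg hc, w, if_neg hc]
      _ = wt m v ls := prod_w_eq_wt m v ls
  -- denominator event
  have hHistSet : {ω | ∀ t, 1 ≤ t → t ≤ k' + 1 → (V X t ω, L X t ω) = h t}
      = {ω | HistF h (k' + 1) (fun t => X t ω)} :=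
    Set.ext (fun ω => HistF_iff_VL X ω h (k' + 1) hl)
  have hDval : μ {ω | ∀ t, 1 ≤ t → t ≤ k' + 1 → (V X t ω, L X t ω) = h t}
      = TS m h k' (h (k' + 1)).1 * G2 m (h (k' + 1)).1 (h (k' + 1)).2 := by
    rw [hHistSet, measure_HistF μ m X hX hCyl h (k' + 1) hl, SS_succ m h k' hlk]
  -- numerator event via extended history
  set h' : ℕ → ℕ × ℕ := fun t => if t = k' + 2 then (j, lam) else h t with hh'def
  have hagree : ∀ t, 1 ≤ t → t ≤ k' + 1 → h' t = h t := fun t _ ht2 => if_neg (by omega)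
  have hh'top : h' (k' + 2) = (j, lam) := if_pos rfl
  have hl' : ∀ t, 1 ≤ t → t ≤ k' + 2 → 1 ≤ (h' t).2 := by
    intro t ht1 ht2
    by_cases he : t = k' + 2
    · subst he
      rw [hh'top]
      exact hjmem.2.2.1
    · rw [show h' t = h t from if_neg he]
      exact hl t ht1 (by omega)
  have hNumSet : {ω | V X (k' + 1 + 1) ω = j ∧ L X (k' + 1 + 1) ω = lam}
      ∩ {ω | ∀ t, 1 ≤ t → t ≤ k' + 1 → (V X t ω, L X t ω) = h t}
      = {ω | HistF h' (k' + 2) (fun t => X t ω)} := by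
    ext ω
    simp only [Set.mem_inter_iff, Set.mem_setOf_eq]
    rw [← HistF_iff_VL X ω h' (k' + 2) hl']
    constructor
    · rintro ⟨⟨hV, hL⟩, hhist⟩ t ht1 ht2
      by_cases he : t = k' + 2
      · subst he
        rw [hh'top]
        simp only [Prod.mk.injEq]
        exact ⟨hV, hL⟩
      · rw [hagree t ht1 (by omega)]
        exact hhist t ht1 (by omega)
    · intro hall
      refine ⟨⟨?_, ?_⟩, ?_⟩
      · have := hall (k' + 2) (by omega) le_rfl
        rw [hh'top] at this
        exact congrArg Prod.fst this
      · have := hall (k' + 2) (by omega) le_rfl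
        rw [hh'top] at this
        exact congrArg Prod.snd this
      · intro t ht1 ht2
        have := hall t ht1 (by omega)
        rw [hagree t ht1 ht2] at this
        exact this
  have hNval : μ ({ω | V X (k' + 1 + 1) ω = j ∧ L X (k' + 1 + 1) ω = lam}
      ∩ {ω | ∀ t, 1 ≤ t → t ≤ k' + 1 → (V X t ω, L X t ω) = h t})
      = TS m h k' (h (k' + 1)).1 * G m (h (k' + 1)).1 (h (k' + 1)).2 j * G2 m j lam := by
    rw [hNumSet, measure_HistF μ m X hX hCyl h' (k' + 2) hl']
    rw [SS_succ m h' (k' + 1) (by rw [show h' (k' + 1 + 1) = (j, lam) from hh'top]; exact hjmem.2.2.1)]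
    rw [show h' (k' + 1 + 1) = (j, lam) from hh'top]
    rw [TS_congr m h' h (k' + 1) j hagree]
    rw [TS_succ m h k' j hlk]
  -- constant-history helpers (single run)
  have hconst : ∀ (i₀ ℓ₀ : ℕ), 1 ≤ ℓ₀ →
      (∀ t, 1 ≤ t → t ≤ 1 → 1 ≤ ((fun _ : ℕ => (i₀, ℓ₀)) t).2) :=
    fun _ _ hℓ _ _ _ => hℓ
  have hLSet : ∀ i₀ ℓ₀ : ℕ, 1 ≤ ℓ₀ →
      {ω | L X 1 ω = ℓ₀} ∩ {ω | V X 1 ω = i₀}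
      = {ω | HistF (fun _ => (i₀, ℓ₀)) 1 (fun t => X t ω)} := by
    intro i₀ ℓ₀ hℓ
    ext ω
    simp only [Set.mem_inter_iff, Set.mem_setOf_eq]
    rw [← HistF_iff_VL X ω (fun _ => (i₀, ℓ₀)) 1 (hconst i₀ ℓ₀ hℓ)]
    constructor
    · rintro ⟨hL, hV⟩ t ht1 ht2
      have ht : t = 1 := by omega
      subst ht
      simp only [Prod.mk.injEq]
      exact ⟨hV, hL⟩
    · intro hall
      have := hall 1 le_rfl le_rfl
      exact ⟨congrArg Prod.snd this, congrArg Prod.fst this⟩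
  have hLval : ∀ i₀ ℓ₀ : ℕ, 1 ≤ ℓ₀ →
      μ ({ω | L X 1 ω = ℓ₀} ∩ {ω | V X 1 ω = i₀}) = ini m i₀ * G2 m i₀ ℓ₀ := by
    intro i₀ ℓ₀ hℓ
    rw [hLSet i₀ ℓ₀ hℓ, measure_HistF μ m X hX hCyl _ 1 (hconst i₀ ℓ₀ hℓ),
      SS_succ m _ 0 hℓ, TS_zero]
  have hPhiSet : ∀ i₀ ℓ₀ j₀ : ℕ, 1 ≤ ℓ₀ →
      {ω | V X 2 ω = j₀ ∧ L X 1 ω = ℓ₀} ∩ {ω | V X 1 ω = i₀}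
      = {ω | HistF (fun _ => (i₀, ℓ₀)) 1 (fun t => X t ω)
          ∧ X (sp (fun _ => (i₀, ℓ₀)) 1) ω = j₀} := by
    intro i₀ ℓ₀ j₀ hℓ
    ext ω
    simp only [Set.mem_inter_iff, Set.mem_setOf_eq]
    constructor
    · rintro ⟨⟨hV2, hL⟩, hV1⟩
      have hhist : HistF (fun _ => (i₀, ℓ₀)) 1 (fun t => X t ω) := by
        rw [← HistF_iff_VL X ω (fun _ => (i₀, ℓ₀)) 1 (hconst i₀ ℓ₀ hℓ)]
        intro t ht1 ht2
        have ht : t = 1 := by omega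
        subst ht
        simp only [Prod.mk.injEq]
        exact ⟨hV1, hL⟩
      refine ⟨hhist, ?_⟩
      have hrs := runStart_eq_of_HistF X ω (fun _ => (i₀, ℓ₀)) 1 (hconst i₀ ℓ₀ hℓ) hhist 1 le_rfl
      rw [← hrs]
      exact hV2
    · rintro ⟨hhist, hpin⟩
      have hVL := (HistF_iff_VL X ω (fun _ => (i₀, ℓ₀)) 1 (hconst i₀ ℓ₀ hℓ)).mpr hhist
        1 le_rfl le_rfl
      have hrs := runStart_eq_of_HistF X ω (fun _ => (i₀, ℓ₀)) 1 (hconst i₀ ℓ₀ hℓ) hhist 1 le_rfl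
      refine ⟨⟨?_, congrArg Prod.snd hVL⟩, congrArg Prod.fst hVL⟩
      show X (runStart X ω 1) ω = j₀
      rw [hrs]
      exact hpin
  have hPhiVal : ∀ i₀ ℓ₀ j₀ : ℕ, 1 ≤ ℓ₀ →
      μ ({ω | V X 2 ω = j₀ ∧ L X 1 ω = ℓ₀} ∩ {ω | V X 1 ω = i₀})
      = ini m i₀ * G m i₀ ℓ₀ j₀ := by
    intro i₀ ℓ₀ j₀ hℓ
    rw [hPhiSet i₀ ℓ₀ j₀ hℓ, measure_HistF_pin μ m X hX hCyl _ 1 j₀ (hconst i₀ ℓ₀ hℓ),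
      TS_succ m _ 0 j₀ hℓ, TS_zero]
  have hVSet : ∀ i₀ : ℕ, {ω | V X 1 ω = i₀}
      = {ω | HistF h 0 (fun t => X t ω) ∧ X (sp h 0) ω = i₀} := by
    intro i₀
    ext ω
    simp only [Set.mem_setOf_eq]
    constructor
    · intro hV
      exact ⟨HistF_zero h _, hV⟩
    · rintro ⟨-, hpin⟩
      exact hpin
  have hVval : ∀ i₀ : ℕ, μ {ω | V X 1 ω = i₀} = ini m i₀ := by
    intro i₀
    rw [hVSet i₀, measure_HistF_pin μ m X hX hCyl h 0 i₀ (by intro t ht1 ht0; omega), TS_zero]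
  -- nonzeroness and finiteness facts
  have hPC : TS m h k' (h (k' + 1)).1 * G2 m (h (k' + 1)).1 (h (k' + 1)).2 ≠ 0 := by
    rw [← hDval]
    exact hpos
  have hPne : TS m h k' (h (k' + 1)).1 ≠ 0 := fun h0 => hPC (by rw [h0, zero_mul])
  have hCne : G2 m (h (k' + 1)).1 (h (k' + 1)).2 ≠ 0 := fun h0 => hPC (by rw [h0, mul_zero])
  have hPCle : TS m h k' (h (k' + 1)).1 * G2 m (h (k' + 1)).1 (h (k' + 1)).2 ≤ 1 := by
    rw [← hDval]
    exact prob_le_one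
  have hPtop : TS m h k' (h (k' + 1)).1 ≠ ⊤ := by
    intro htop
    rw [htop, ENNReal.top_mul hCne] at hPCle
    simp at hPCle
  have hinii : ini m (h (k' + 1)).1 = (1 : ℝ≥0∞) / m := by rw [ini, if_pos hiIcc]
  have hinij : ini m j = (1 : ℝ≥0∞) / m := by rw [ini, if_pos hjIcc]
  have hdivne : (1 : ℝ≥0∞) / m ≠ 0 := by
    rw [ne_eq, ENNReal.div_eq_zero_iff]
    push_neg
    exact ⟨one_ne_zero, ENNReal.natCast_ne_top m⟩
  have hAtop : G m (h (k' + 1)).1 (h (k' + 1)).2 j ≠ ⊤ := by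
    have hle : ini m (h (k' + 1)).1 * G m (h (k' + 1)).1 (h (k' + 1)).2 j ≤ 1 := by
      rw [← hPhiVal (h (k' + 1)).1 (h (k' + 1)).2 j hlk]
      exact prob_le_one
    intro htop
    rw [htop, hinii, ENNReal.mul_top hdivne] at hle
    simp at hle
  have hBtop : G2 m j lam ≠ ⊤ := by
    have hle : ini m j * G2 m j lam ≤ 1 := by
      rw [← hLval j lam hjmem.2.2.1]
      exact prob_le_one
    intro htop
    rw [htop, hinij, ENNReal.mul_top hdivne] at hle
    simp at hle
  -- final computation
  simp only [condP]
  rw [hNval, hDval, hPhiVal (h (k' + 1)).1 (h (k' + 1)).2 j hlk,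
    hLval j lam hjmem.2.2.1, hLval (h (k' + 1)).1 (h (k' + 1)).2 hlk,
    hVval (h (k' + 1)).1, hVval j]
  rw [hinii, hinij]
  simp only [ENNReal.toReal_mul]
  have hr0 : ((1 : ℝ≥0∞) / m).toReal ≠ 0 := by
    rw [ENNReal.toReal_div, ENNReal.toReal_one, ENNReal.toReal_natCast]
    apply one_div_ne_zero
    have : (2 : ℝ) ≤ (m : ℝ) := by exact_mod_cast hm
    linarith
  have hp0 : (TS m h k' (h (k' + 1)).1).toReal ≠ 0 := ENNReal.toReal_ne_zero.mpr ⟨hPne, hPtop⟩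
  rw [mul_div_cancel_left₀ _ hr0, mul_div_cancel_left₀ _ hr0, mul_div_cancel_left₀ _ hr0]
  rw [mul_assoc, mul_div_mul_left _ _ hp0]
end
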